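/- arXiv:1908.06156 — 9 statements merged into one kernel-verified Lean document; each statement's English description precedes it below -/
import Mathlib

section
/- A ring S is isomorphic to a B-ring R ⊆ Gh(I) for some finite set I if and only if S is a commutative ring which, as a ℤ-module, is torsion-free of finite rank, and ℚ ⊗_ℤ S is isomorphic as a ℚ-algebra to a finite product of copies of ℚ (namely |I| copies). -/
open scoped TensorProduct

/-- `Gh I = ∏_{i ∈ I} ℤ` is the ghost ring; a subring `R ⊆ Gh I` is a *B-ring* if for all
distinct `i, j ∈ I` there is `r ∈ R` with `r i ≠ 0` and `r j = 0`. -/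
def IsBRing {I : Type*} (R : Subring (I → ℤ)) : Prop :=
  ∀ i j : I, i ≠ j → ∃ r ∈ R, r i ≠ 0 ∧ r j = 0

theorem exists_int_smul_eq {M : Type*} [AddCommGroup M] (x : ℚ ⊗[ℤ] M) :
    ∃ (n : ℤ) (m : M), n ≠ 0 ∧ (n : ℚ) • x = (1 : ℚ) ⊗ₜ[ℤ] m := by
  induction x using TensorProduct.induction_on with
  | zero => exact ⟨1, 0, one_ne_zero, by simp⟩
  | tmul q m =>
      refine ⟨(q.den : ℤ), q.num • m, by exact_mod_cast q.den_ne_zero, ?_⟩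
      rw [TensorProduct.smul_tmul', TensorProduct.tmul_smul,
        ← Int.cast_smul_eq_zsmul ℚ, TensorProduct.smul_tmul']
      congr 1
      simp [smul_eq_mul]
  | add x y hx hy =>
      obtain ⟨n, m, hn, hm⟩ := hx
      obtain ⟨n', m', hn', hm'⟩ := hy
      refine ⟨n * n', n' • m + n • m', mul_ne_zero hn hn', ?_⟩
      rw [smul_add, TensorProduct.tmul_add, Int.cast_mul]
      rw [TensorProduct.tmul_smul, TensorProduct.tmul_smul, ← hm, ← hm',
        ← Int.cast_smul_eq_zsmul ℚ, ← Int.cast_smul_eq_zsmul ℚ, smul_smul, smul_smul]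
      ring_nf

theorem forward_misc {S : Type} [Ring S] {I : Type} [Fintype I]
    (R : Subring (I → ℤ)) (e : S ≃+* R) :
    (∀ a b : S, a * b = b * a) ∧ Module.Finite ℤ S ∧ NoZeroSMulDivisors ℤ S := by
  refine ⟨?_, ?_, ?_⟩
  · intro a b
    apply e.injective
    rw [map_mul, map_mul, mul_comm]
  · let N : Submodule ℤ (I → ℤ) := AddSubgroup.toIntSubmodule R.toAddSubgroup
    haveI : Module.Finite ℤ ↥N := Module.Finite.iff_fg.mpr (IsNoetherian.noetherian N)
    let φ : ↥N →+ S :=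
      { toFun := fun x => e.symm ⟨x.1, x.2⟩
        map_zero' := by
          have : ((0 : ↥N).1 : I → ℤ) = 0 := rfl
          show e.symm ⟨(0 : ↥N).1, _⟩ = 0
          rw [show (⟨(0 : ↥N).1, (0:↥N).2⟩ : ↥R) = 0 from Subtype.ext this, map_zero]
        map_add' := by
          intro x y
          show e.symm ⟨(x + y).1, _⟩ = e.symm ⟨x.1, _⟩ + e.symm ⟨y.1, _⟩
          rw [← map_add]
          congr 1 }
    exact Module.Finite.of_surjective φ.toIntLinearMap
      (fun s => ⟨⟨(e s : I → ℤ), (e s).2⟩, by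
        show e.symm ⟨((e s : ↥R) : I → ℤ), _⟩ = s
        exact e.symm_apply_apply s⟩)
  · constructor
    intro n s h
    have h1 : e (n • s) = 0 := by rw [h, map_zero]
    rw [map_zsmul] at h1
    have h2 : n • ((e s : ↥R) : I → ℤ) = 0 := by
      have hc : ((n • e s : ↥R) : I → ℤ) = n • ((e s : ↥R) : I → ℤ) := rfl
      rw [← hc, h1]
      rfl
    rcases smul_eq_zero.mp h2 with h3 | h3
    · exact Or.inl h3
    · refine Or.inr (e.injective ?_)
      rw [map_zero]
      exact Subtype.ext h3

theorem forward_tensor {S : Type} [Ring S] {I : Type} [Fintype I]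
    (R : Subring (I → ℤ)) (hR : IsBRing R) (e : S ≃+* R) :
    Nonempty ((ℚ ⊗[ℤ] S) ≃ₐ[ℚ] (I → ℚ)) := by
  classical
  let f : S →+* (I → ℚ) :=
    (Pi.ringHom fun i => (Int.castRingHom ℚ).comp (Pi.evalRingHom (fun _ : I => ℤ) i)).comp
      (R.subtype.comp (e : S →+* R))
  have hf : ∀ (s : S) (i : I), f s i = ((e s : I → ℤ) i : ℚ) := fun s i => rfl
  have hfinj : Function.Injective f := by
    intro a b hab
    apply e.injective
    apply Subtype.ext
    funext i
    have := congrFun hab i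
    rw [hf, hf] at this
    exact_mod_cast this
  let ψ : (ℚ ⊗[ℤ] S) →ₐ[ℚ] (I → ℚ) :=
    Algebra.TensorProduct.lift (Algebra.ofId ℚ (I → ℚ)) f.toIntAlgHom fun _ _ => Commute.all _ _
  have hψ : ∀ (q : ℚ) (s : S), ψ (q ⊗ₜ s) = q • f s := by
    intro q s
    show Algebra.TensorProduct.lift _ _ _ (q ⊗ₜ s) = _
    rw [Algebra.TensorProduct.lift_tmul, Algebra.ofId_apply, ← Algebra.smul_def]
    rfl
  have hinj : Function.Injective ψ := by
    rw [injective_iff_map_eq_zero]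
    intro x hx
    obtain ⟨n, m, hn, hm⟩ := exists_int_smul_eq x
    have h2 : ψ ((n : ℚ) • x) = ψ ((1 : ℚ) ⊗ₜ m) := by rw [hm]
    rw [map_smul, hx, smul_zero, hψ 1 m, one_smul] at h2
    have hm0 : m = 0 := hfinj (by rw [← h2, map_zero])
    rw [hm0, TensorProduct.tmul_zero] at hm
    have := smul_eq_zero.mp hm
    rcases this with h | h
    · exact absurd (by exact_mod_cast h) hn
    · exact h
  have hsingle : ∀ i : I, ∃ y, ψ y = Pi.single i 1 := by
    intro i
    choose r hrR hri hrj using fun j (h : i ≠ j) => hR i j h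
    let u : I → ↥R := fun j => if h : i ≠ j then ⟨r j h, hrR j h⟩ else 1
    let p : ↥R := ∏ j ∈ Finset.univ.erase i, u j
    have hp : ∀ k, (p : I → ℤ) k = ∏ j ∈ Finset.univ.erase i, (u j : I → ℤ) k := by
      intro k
      have : (p : I → ℤ) = ∏ j ∈ Finset.univ.erase i, (u j : I → ℤ) := map_prod R.subtype _ _
      rw [this, Finset.prod_apply]
    have hpi : (p : I → ℤ) i ≠ 0 := by
      rw [hp]
      apply Finset.prod_ne_zero_iff.mpr
      intro j hj
      have hij : i ≠ j := fun h => (Finset.mem_erase.mp hj).1 h.symm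
      simp only [u, dif_pos hij]
      exact hri j hij
    have hpk : ∀ k, k ≠ i → (p : I → ℤ) k = 0 := by
      intro k hk
      rw [hp]
      apply Finset.prod_eq_zero (Finset.mem_erase.mpr ⟨hk, Finset.mem_univ k⟩)
      have hik : i ≠ k := fun h => hk h.symm
      simp only [u, dif_pos hik]
      exact hrj k hik
    refine ⟨(((p : I → ℤ) i : ℚ)⁻¹) ⊗ₜ (e.symm p), ?_⟩
    rw [hψ]
    funext k
    have hfk : f (e.symm p) k = ((p : I → ℤ) k : ℚ) := by
      rw [hf, e.apply_symm_apply]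
    by_cases hk : k = i
    · subst hk
      rw [Pi.smul_apply, hfk, Pi.single_eq_same, smul_eq_mul,
        inv_mul_cancel₀ (by exact_mod_cast hpi)]
    · rw [Pi.smul_apply, hfk, Pi.single_eq_of_ne hk, hpk k hk]
      simp
  have hsurj : Function.Surjective ψ := by
    intro v
    have hmem : ∀ i, Pi.single i (v i) ∈ ψ.range := by
      intro i
      obtain ⟨y, hy⟩ := hsingle i
      refine ⟨(v i) • y, ?_⟩
      show ψ ((v i) • y) = _
      rw [map_smul, hy]
      funext k
      by_cases hk : k = i
      · subst hk; simp
      · simp [Pi.single_eq_of_ne hk]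
    have : v ∈ ψ.range := by
      rw [← Finset.univ_sum_single v]
      exact Subalgebra.sum_mem _ fun i _ => hmem i
    exact this
  exact ⟨AlgEquiv.ofBijective ψ ⟨hinj, hsurj⟩⟩

theorem BRing_backward {S : Type} [Ring S] (hcomm : ∀ a b : S, a * b = b * a)
    (hfin : Module.Finite ℤ S) (htf : NoZeroSMulDivisors ℤ S) {I : Type} [Fintype I]
    (g : (ℚ ⊗[ℤ] S) ≃ₐ[ℚ] (I → ℚ)) :
    ∃ (R : Subring (I → ℤ)), IsBRing R ∧ Nonempty (S ≃+* R) := by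
  classical
  letI : CommRing S := { ‹Ring S› with mul_comm := hcomm }
  haveI : Module.Free ℤ S := Module.free_of_finite_type_torsion_free'
  have hj : Function.Injective (fun s : S => ((1:ℚ) ⊗ₜ[ℤ] s : ℚ ⊗[ℤ] S)) := by
    have hflat := Module.Flat.rTensor_preserves_injective_linearMap
      (M := S) (Algebra.linearMap ℤ ℚ) (fun a b h => by
        have : ((a : ℤ) : ℚ) = ((b : ℤ) : ℚ) := by simpa using h
        exact_mod_cast this)
    intro a b hab
    have h2 : (Algebra.linearMap ℤ ℚ).rTensor S ((TensorProduct.lid ℤ S).symm a)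
        = (Algebra.linearMap ℤ ℚ).rTensor S ((TensorProduct.lid ℤ S).symm b) := by
      rw [TensorProduct.lid_symm_apply, TensorProduct.lid_symm_apply,
        LinearMap.rTensor_tmul, LinearMap.rTensor_tmul]
      simpa using hab
    exact (TensorProduct.lid ℤ S).symm.injective (hflat h2)
  let f : S →+* (I → ℚ) :=
    (g.toAlgHom.toRingHom).comp (Algebra.TensorProduct.includeRight.toRingHom)
  have hfs : ∀ s : S, f s = g ((1:ℚ) ⊗ₜ[ℤ] s) := fun s => rfl
  have hfinj : Function.Injective f := by
    intro a b hab
    rw [hfs, hfs] at hab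
    exact hj (g.injective hab)
  haveI : Algebra.IsIntegral ℤ S := Algebra.IsIntegral.of_finite ℤ S
  have hint : ∀ (s : S) (i : I), ∃ z : ℤ, (z : ℚ) = f s i := by
    intro s i
    have h1 : IsIntegral ℤ s := Algebra.IsIntegral.isIntegral s
    have h2 : IsIntegral ℤ (f s i) :=
      h1.map (((Pi.evalRingHom (fun _ : I => ℚ) i).comp f).toIntAlgHom)
    obtain ⟨y, hy⟩ := IsIntegrallyClosed.isIntegral_iff.mp h2
    exact ⟨y, by rw [← hy]; simp [algebraMap_int_eq]⟩
  choose Fz hFz using hint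
  have cinj : Function.Injective ((↑) : ℤ → ℚ) := Int.cast_injective
  let F : S →+* (I → ℤ) :=
    { toFun := fun s i => Fz s i
      map_one' := by
        funext i
        apply cinj
        rw [hFz, map_one]
        simp
      map_mul' := by
        intro a b
        funext i
        apply cinj
        show ((Fz (a*b) i : ℤ) : ℚ) = ((Fz a i * Fz b i : ℤ) : ℚ)
        rw [hFz, map_mul, Pi.mul_apply, Int.cast_mul, hFz, hFz]
      map_zero' := by
        funext i
        apply cinj
        rw [hFz, map_zero]
        simp
      map_add' := by
        intro a b
        funext i
        apply cinj
        show ((Fz (a+b) i : ℤ) : ℚ) = ((Fz a i + Fz b i : ℤ) : ℚ)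
        rw [hFz, map_add, Pi.add_apply, Int.cast_add, hFz, hFz] }
  have hFcast : ∀ (s : S) (i : I), ((F s i : ℤ) : ℚ) = f s i := hFz
  have hFinj : Function.Injective F := by
    intro a b hab
    apply hfinj
    funext i
    rw [← hFcast a i, ← hFcast b i]
    exact_mod_cast congrFun hab i
  refine ⟨F.range, ?_, ⟨RingEquiv.ofBijective F.rangeRestrict
    ⟨fun a b h => hFinj (Subtype.ext_iff.mp h), F.rangeRestrict_surjective⟩⟩⟩
  intro i j hij
  obtain ⟨n, m, hn, hm⟩ := exists_int_smul_eq (g.symm (Pi.single i 1))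
  have hfm : f m = (n : ℚ) • (Pi.single i 1 : I → ℚ) := by
    rw [hfs, ← hm, map_smul, g.apply_symm_apply]
  refine ⟨F m, ⟨m, rfl⟩, ?_, ?_⟩
  · intro h0
    have h1 := hFcast m i
    rw [h0, hfm] at h1
    simp [Pi.single_eq_same] at h1
    exact hn (by exact_mod_cast h1.symm)
  · apply cinj
    rw [hFcast m j, hfm]
    simp [Pi.single_eq_of_ne (Ne.symm hij)]

/-- main -/
theorem stmt_0 (S : Type) [Ring S] :
    ((∃ (I : Type) (_ : Fintype I) (R : Subring (I → ℤ)),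
        IsBRing R ∧ Nonempty (S ≃+* R)) ↔
      ((∀ a b : S, a * b = b * a) ∧ Module.Finite ℤ S ∧ NoZeroSMulDivisors ℤ S ∧
        ∃ (I : Type) (_ : Fintype I), Nonempty ((ℚ ⊗[ℤ] S) ≃ₐ[ℚ] (I → ℚ)))) ∧
    (∀ (I : Type) (_ : Fintype I) (R : Subring (I → ℤ)),
      IsBRing R → Nonempty (S ≃+* R) → Nonempty ((ℚ ⊗[ℤ] S) ≃ₐ[ℚ] (I → ℚ))) := by
  constructor
  · constructor
    · rintro ⟨I, hI, R, hR, ⟨e⟩⟩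
      obtain ⟨h1, h2, h3⟩ := forward_misc R e
      exact ⟨h1, h2, h3, I, hI, forward_tensor R hR e⟩
    · rintro ⟨hcomm, hfin, htf, I, hI, ⟨g⟩⟩
      obtain ⟨R, hR, he⟩ := BRing_backward hcomm hfin htf g
      exact ⟨I, hI, R, hR, he⟩
  · rintro I hI R hR ⟨e⟩
    exact forward_tensor R hR e
end

section
/- Let R ⊆ Gh(I) be a B-ring, p a prime, and let E be an equivalence class of the relation ∼_p on I. Then there exists r ∈ R such that r(i) ≡ 1 (mod p) for every i ∈ E and r(j) ≡ 0 (mod p) for every j ∈ I with j ∉ E. -/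
/-- The equivalence relation `∼_p` on `I`: `i ∼_p j` iff `r i ≡ r j (mod p)` for all `r ∈ R`
(equivalently, `i = j` or `p ∣ d(i, j)` where `d(i, j)` is the greatest positive integer
dividing `r i - r j` for all `r ∈ R`). -/
def SimP {I : Type*} (R : Subring (I → ℤ)) (p : ℕ) (i j : I) : Prop :=
  ∀ r ∈ R, (p : ℤ) ∣ (r i - r j)

/-- Let `R ⊆ Gh(I)` be a B-ring, `p` a prime, and let `E` be an equivalence class of the
relation `∼_p` on `I` (here, the class of an element `i₀ ∈ I`).  Then there exists `r ∈ R`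
with `r i ≡ 1 (mod p)` for every `i ∈ E` and `r j ≡ 0 (mod p)` for every `j ∉ E`. -/
theorem stmt_4 (I : Type) [Fintype I] (R : Subring (I → ℤ)) (hR : IsBRing R)
    (p : ℕ) (hp : p.Prime) (i₀ : I) :
    ∃ r ∈ R, (∀ i : I, SimP R p i₀ i → (p : ℤ) ∣ (r i - 1)) ∧
      (∀ j : I, ¬ SimP R p i₀ j → (p : ℤ) ∣ r j) := by
  classical
  haveI : Fact p.Prime := ⟨hp⟩
  -- For every j, find u ∈ R with u j = 0 whenever j is not equivalent to i₀,
  -- and p ∤ u i₀.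
  have hex : ∀ j : I, ∃ u, u ∈ R ∧ (¬ SimP R p i₀ j → u j = 0) ∧ ¬ (p : ℤ) ∣ u i₀ := by
    intro j
    by_cases hj : SimP R p i₀ j
    · refine ⟨1, R.one_mem, fun h => absurd hj h, fun h => ?_⟩
      have h1 : (p : ℤ) ≤ 1 := Int.le_of_dvd one_pos (by simpa using h)
      exact absurd h1 (by exact_mod_cast hp.one_lt.not_ge)
    · simp only [SimP, not_forall] at hj
      obtain ⟨s, hsR, hs⟩ := hj
      refine ⟨s - ((s j : ℤ) : I → ℤ), R.sub_mem hsR (intCast_mem R _), fun _ => ?_, ?_⟩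
      · simp
      · simpa using hs
  choose u huR hu0 hup using hex
  have hrmem : (∏ k : I, (u k) ^ (p - 1)) ∈ R := prod_mem fun k _ => pow_mem (huR k) _
  refine ⟨∏ k : I, (u k) ^ (p - 1), hrmem, ?_, ?_⟩
  · intro i hi
    have hprod : (p : ℤ) ∣ (∏ k : I, (u k) ^ (p - 1)) i₀ - 1 := by
      rw [← ZMod.intCast_zmod_eq_zero_iff_dvd]
      push_cast
      rw [sub_eq_zero, Finset.prod_apply]
      simp only [Pi.pow_apply]
      push_cast
      refine Finset.prod_eq_one fun k _ => ?_
      have hk : ((u k i₀ : ℤ) : ZMod p) ≠ 0 := by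
        rw [Ne, ZMod.intCast_zmod_eq_zero_iff_dvd]
        exact hup k
      rw [ZMod.pow_card_sub_one_eq_one hk]
    have hdiff := hi _ hrmem
    have : (∏ k : I, (u k) ^ (p - 1)) i - 1 =
        -((∏ k : I, (u k) ^ (p - 1)) i₀ - (∏ k : I, (u k) ^ (p - 1)) i) +
        ((∏ k : I, (u k) ^ (p - 1)) i₀ - 1) := by ring
    rw [this]
    exact dvd_add (dvd_neg.mpr hdiff) hprod
  · intro j hj
    have : (∏ k : I, (u k) ^ (p - 1)) j = 0 := by
      rw [Finset.prod_apply]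
      refine Finset.prod_eq_zero (Finset.mem_univ j) ?_
      simp only [Pi.pow_apply, hu0 j hj]
      exact zero_pow (Nat.sub_ne_zero_of_lt hp.one_lt)
    simp [this]
end

section
/- Let R ⊆ Gh(I) be a B-ring, p a prime, k = 𝔽_p, R̄ = R/pR, and let 𝓔 be the set of equivalence classes of ∼_p on I. The map θ : R̄ → ∏_{E∈𝓔} k induced by r ↦ (r(i) mod p)_{E∈𝓔} (where i is any element of E) is a well-defined surjective homomorphism of k-algebras whose kernel is exactly the Jacobson radical of R̄ (equivalently, the kernel is a nilpotent ideal). -/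
set_option synthInstance.maxHeartbeats 400000
set_option maxHeartbeats 1000000

noncomputable section

/-- `∼_p` as a setoid; its quotient is the set `𝓔` of equivalence classes. -/
def simPSetoid {I : Type*} (R : Subring (I → ℤ)) (p : ℕ) : Setoid I where
  r := SimP R p
  iseqv := by
    refine ⟨fun i r _ => by simp, fun {i j} h r hr => dvd_sub_comm.mp (h r hr),
      fun {i j k} h1 h2 r hr => ?_⟩
    have := dvd_add (h1 r hr) (h2 r hr)
    rwa [sub_add_sub_cancel] at this

/-- Let `R ⊆ Gh(I)` be a B-ring, `p` a prime, `k = 𝔽_p`, `R̄ = R/pR`, and `𝓔` the set of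
equivalence classes of `∼_p` on `I`.  The map `θ : R̄ → ∏_{E ∈ 𝓔} k` induced by
`r ↦ (r i mod p)_E` (for `i` any element of `E`) is a well-defined surjective homomorphism of
`k`-algebras (here: of rings; all rings in sight are `𝔽_p`-algebras via their characteristic)
whose kernel is exactly the Jacobson radical of `R̄` (equivalently, a nilpotent ideal). -/
theorem stmt_5 (I : Type) [Fintype I] (R : Subring (I → ℤ)) (hR : IsBRing R)
    (p : ℕ) (hp : p.Prime) :
    ∃ θ : (R ⧸ Ideal.span {(p : R)}) →+* (Quotient (simPSetoid R p) → ZMod p),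
      (∀ r : R, ∀ i : I,
        θ (Ideal.Quotient.mk _ r) (Quotient.mk (simPSetoid R p) i) = ((r : I → ℤ) i : ZMod p)) ∧
      Function.Surjective θ ∧
      RingHom.ker θ = Ideal.jacobson (⊥ : Ideal (R ⧸ Ideal.span {(p : R)})) ∧
      ∃ n : ℕ, (RingHom.ker θ) ^ n = ⊥ := by
  classical
  haveI : Fact p.Prime := ⟨hp⟩
  haveI : NeZero p := ⟨hp.ne_zero⟩
  -- well-definedness on classes
  have hwd : ∀ (r : R) (i j : I), SimP R p i j →
      (((r : I → ℤ) i : ZMod p)) = ((r : I → ℤ) j : ZMod p) := by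
    intro r i j h
    have h1 : ((((r : I → ℤ) i - (r : I → ℤ) j : ℤ)) : ZMod p) = 0 :=
      (ZMod.intCast_zmod_eq_zero_iff_dvd _ p).mpr (h r r.2)
    push_cast at h1
    linear_combination h1
  -- the homomorphism on R
  let φ : R →+* (Quotient (simPSetoid R p) → ZMod p) :=
  { toFun := fun r => Quotient.lift (fun i => ((r : I → ℤ) i : ZMod p)) (hwd r)
    map_one' := funext <| Quotient.ind fun i => Int.cast_one
    map_mul' := fun a b => funext <| Quotient.ind fun i => Int.cast_mul _ _
    map_zero' := funext <| Quotient.ind fun i => Int.cast_zero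
    map_add' := fun a b => funext <| Quotient.ind fun i => Int.cast_add _ _ }
  have hφ : ∀ (r : R) (i : I),
      φ r (Quotient.mk (simPSetoid R p) i) = ((r : I → ℤ) i : ZMod p) := fun r i => rfl
  have hker0 : ∀ a ∈ Ideal.span {(p : R)}, φ a = 0 := by
    intro a ha
    obtain ⟨c, rfl⟩ := Ideal.mem_span_singleton'.mp ha
    have : φ (p : R) = 0 := by
      funext E
      induction E using Quotient.ind with
      | _ i =>
        show ((((p : R) : I → ℤ)) i : ZMod p) = 0
        push_cast
        simp
    rw [map_mul, this, mul_zero]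
  let θ : (R ⧸ Ideal.span {(p : R)}) →+* (Quotient (simPSetoid R p) → ZMod p) :=
    Ideal.Quotient.lift _ φ hker0
  have hθmk : ∀ r : R, θ (Ideal.Quotient.mk _ r) = φ r := fun r => rfl
  have hspec : ∀ r : R, ∀ i : I,
      θ (Ideal.Quotient.mk _ r) (Quotient.mk (simPSetoid R p) i) = ((r : I → ℤ) i : ZMod p) :=
    fun r i => rfl
  -- separators
  have sep : ∀ E E' : Quotient (simPSetoid R p),
      ∃ u ∈ φ.range, (E ≠ E' → u E = 1 ∧ u E' = 0) := by
    intro E E'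
    by_cases h : E = E'
    · exact ⟨1, one_mem _, fun h' => absurd h h'⟩
    induction E using Quotient.ind with | _ i => ?_
    induction E' using Quotient.ind with | _ j => ?_
    have hnsim : ¬ SimP R p i j := fun hs => h (Quotient.sound hs)
    rw [SimP] at hnsim
    push_neg at hnsim
    obtain ⟨r, hr, hdvd⟩ := hnsim
    set a : ZMod p := ((r i : ℤ) : ZMod p) with ha
    set b : ZMod p := ((r j : ℤ) : ZMod p) with hb
    have hab : a - b ≠ 0 := by
      intro hEq
      apply hdvd
      rw [← ZMod.intCast_zmod_eq_zero_iff_dvd]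
      push_cast
      rw [← ha, ← hb]
      exact hEq
    refine ⟨((((a - b)⁻¹).val : ℕ) : Quotient (simPSetoid R p) → ZMod p) *
        (φ ⟨r, hr⟩ - ((b.val : ℕ) : Quotient (simPSetoid R p) → ZMod p)), ?_, fun _ => ⟨?_, ?_⟩⟩
    · exact mul_mem (natCast_mem _ _) (sub_mem ⟨⟨r, hr⟩, rfl⟩ (natCast_mem _ _))
    · show ((((a - b)⁻¹).val : ℕ) : ZMod p) *
        (φ ⟨r, hr⟩ (Quotient.mk (simPSetoid R p) i) - ((b.val : ℕ) : ZMod p)) = 1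
      rw [hφ, ZMod.natCast_rightInverse, ZMod.natCast_rightInverse, ← ha]
      exact inv_mul_cancel₀ hab
    · show ((((a - b)⁻¹).val : ℕ) : ZMod p) *
        (φ ⟨r, hr⟩ (Quotient.mk (simPSetoid R p) j) - ((b.val : ℕ) : ZMod p)) = 0
      rw [hφ, ZMod.natCast_rightInverse, ZMod.natCast_rightInverse, ← hb, sub_self, mul_zero]
  choose u humem huval using sep
  haveI : Fintype (Quotient (simPSetoid R p)) := Fintype.ofFinite _
  -- surjectivity of φ
  have hsurjφ : ∀ f : Quotient (simPSetoid R p) → ZMod p, ∃ r : R, φ r = f := by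
    intro f
    have hg : (∑ E : Quotient (simPSetoid R p),
        (((f E).val : ℕ) : Quotient (simPSetoid R p) → ZMod p) *
          ∏ E' ∈ Finset.univ.erase E, u E E') ∈ φ.range := by
      refine sum_mem fun E _ => mul_mem (natCast_mem _ _) (prod_mem fun E' _ => humem E E')
    obtain ⟨r, hr⟩ := hg
    refine ⟨r, hr.trans ?_⟩
    funext F
    rw [Finset.sum_apply]
    rw [Finset.sum_eq_single F]
    · rw [Pi.mul_apply, Pi.natCast_apply, Finset.prod_apply]
      rw [Finset.prod_eq_one fun E' hE' => ?_]
      · rw [mul_one, ZMod.natCast_rightInverse]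
      · exact (huval F E' (Ne.symm (Finset.mem_erase.mp hE').1)).1
    · intro E _ hne
      rw [Pi.mul_apply, Finset.prod_apply]
      exact mul_eq_zero_of_right _ (Finset.prod_eq_zero (f := fun c => u E c F)
        (Finset.mem_erase.mpr ⟨Ne.symm hne, Finset.mem_univ F⟩) (huval E F hne).2)
    · intro hF
      exact absurd (Finset.mem_univ F) hF
  have hsurj : Function.Surjective θ := by
    intro f
    obtain ⟨r, hr⟩ := hsurjφ f
    exact ⟨Ideal.Quotient.mk _ r, hr⟩
  -- jacobson ⊥ ≤ ker θ
  have h1 : Ideal.jacobson (⊥ : Ideal (R ⧸ Ideal.span {(p : R)})) ≤ RingHom.ker θ := by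
    intro x hx
    have hcoord : ∀ E, θ x E = 0 := by
      intro E
      have hevalsurj : Function.Surjective (Pi.evalRingHom (fun _ => ZMod p) E) :=
        fun c => ⟨fun _ => c, rfl⟩
      have hmax : (RingHom.ker ((Pi.evalRingHom (fun _ => ZMod p) E).comp θ)).IsMaximal :=
        RingHom.ker_isMaximal_of_surjective _ (hevalsurj.comp hsurj)
      have hxk : x ∈ RingHom.ker ((Pi.evalRingHom (fun _ => ZMod p) E).comp θ) :=
        Ideal.mem_sInf.mp hx ⟨bot_le, hmax⟩
      exact RingHom.mem_ker.mp hxk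
    exact RingHom.mem_ker.mpr (funext hcoord)
  -- integrality
  haveI : Algebra.IsIntegral R (I → ℤ) := by
    constructor
    intro t
    refine ⟨∏ c ∈ Finset.univ.image t, (Polynomial.X - Polynomial.C ((c : ℤ) : R)), ?_, ?_⟩
    · exact Polynomial.monic_prod_of_monic _ _ fun c _ => Polynomial.monic_X_sub_C _
    · rw [Polynomial.eval₂_finset_prod]
      refine funext fun i => ?_
      rw [Finset.prod_apply]
      refine Finset.prod_eq_zero (Finset.mem_image_of_mem t (Finset.mem_univ i)) ?_
      simp only [Polynomial.eval₂_sub, Polynomial.eval₂_X, Polynomial.eval₂_C]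
      rw [Pi.sub_apply]
      have : (algebraMap R (I → ℤ)) ((t i : ℤ) : R) = ((t i : ℤ) : I → ℤ) := map_intCast _ _
      rw [this, Pi.intCast_apply]
      simp
  -- ker θ ≤ nilradical
  have h2 : RingHom.ker θ ≤ nilradical (R ⧸ Ideal.span {(p : R)}) := by
    intro x hx
    obtain ⟨r, rfl⟩ := Ideal.Quotient.mk_surjective x
    have hdvd : ∀ i, (p : ℤ) ∣ (r : I → ℤ) i := by
      intro i
      have h0 := congrFun (RingHom.mem_ker.mp hx) (Quotient.mk (simPSetoid R p) i)
      rw [hspec r i] at h0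
      exact (ZMod.intCast_zmod_eq_zero_iff_dvd _ p).mp h0
    choose s hs using hdvd
    have hfact : (r : I → ℤ) = ((p : R) : I → ℤ) * s := by
      funext i
      have : ((p : R) : I → ℤ) i = (p : ℤ) := by push_cast; rfl
      rw [Pi.mul_apply, this]
      exact hs i
    rw [nilradical_eq_sInf]
    refine Ideal.mem_sInf.mpr ?_
    rintro P hP
    haveI : P.IsPrime := hP
    haveI : (Ideal.comap (Ideal.Quotient.mk (Ideal.span {(p : R)})) P).IsPrime :=
      Ideal.IsPrime.comap _
    obtain ⟨Q, -, hQprime, hQc⟩ := Ideal.exists_ideal_over_prime_of_isIntegral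
      (Ideal.comap (Ideal.Quotient.mk (Ideal.span {(p : R)})) P) ⊥ (by
        intro y hy
        have hy0 : algebraMap R (I → ℤ) y = 0 := hy
        have : y = 0 := Subtype.ext hy0
        rw [this]
        exact zero_mem _)
    have hpP : (p : R) ∈ Ideal.comap (Ideal.Quotient.mk (Ideal.span {(p : R)})) P := by
      show Ideal.Quotient.mk _ (p : R) ∈ P
      rw [Ideal.Quotient.eq_zero_iff_mem.mpr (Ideal.mem_span_singleton_self _)]
      exact P.zero_mem
    have hpQ : ((p : R) : I → ℤ) ∈ Q := by
      rw [← hQc] at hpP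
      exact hpP
    have hrQ : (r : I → ℤ) ∈ Q := by
      rw [hfact]
      exact Ideal.mul_mem_right _ _ hpQ
    have hrP : r ∈ Ideal.comap (Ideal.Quotient.mk (Ideal.span {(p : R)})) P := by
      rw [← hQc]
      exact hrQ
    exact hrP
  have hnilj : nilradical (R ⧸ Ideal.span {(p : R)}) ≤
      Ideal.jacobson (⊥ : Ideal (R ⧸ Ideal.span {(p : R)})) := Ideal.radical_le_jacobson
  have hkerj : RingHom.ker θ = Ideal.jacobson (⊥ : Ideal (R ⧸ Ideal.span {(p : R)})) :=
    le_antisymm (h2.trans hnilj) h1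
  have hkern : RingHom.ker θ = nilradical (R ⧸ Ideal.span {(p : R)}) :=
    le_antisymm h2 (hnilj.trans h1)
  -- Noetherian
  haveI : IsNoetherian ℤ R :=
    isNoetherian_of_injective (R.subtype.toAddMonoidHom.toIntLinearMap) Subtype.val_injective
  haveI : IsNoetherianRing R := isNoetherian_of_tower ℤ inferInstance
  haveI : IsNoetherianRing (R ⧸ Ideal.span {(p : R)}) := Ideal.Quotient.isNoetherianRing _
  obtain ⟨n, hn⟩ := IsNoetherianRing.isNilpotent_nilradical (R ⧸ Ideal.span {(p : R)})
  exact ⟨θ, hspec, hsurj, hkerj, n, by rw [hkern]; exact hn⟩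
end
end

section
/- Let R ⊆ Gh(I) be a B-ring, p a prime, k = 𝔽_p, R̄ = R/pR, and let 𝓔 be the set of equivalence classes of ∼_p on I. Then R̄ has exactly |𝓔| maximal ideals, every simple R̄-module is one-dimensional over k, and the modules k_E for E ∈ 𝓔 form a complete irredundant set of simple R̄-modules (k_E ≅ k_{E'} as R̄-modules iff E = E'). -/
set_option synthInstance.maxHeartbeats 400000
set_option maxHeartbeats 1000000

noncomputable section

open CategoryTheory

variable {I : Type} (R : Subring (I → ℤ)) (p : ℕ)

/-- The ring homomorphism `R̄ = R/pR → 𝔽_p` given by `r ↦ r i mod p`, for `i` a representative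
of the `∼_p`-equivalence class `E`. -/
def kEhom (E : Quotient (simPSetoid R p)) :
    (R ⧸ Ideal.span {(p : R)}) →+* ZMod p := by
  refine Ideal.Quotient.lift _
    ((Int.castRingHom (ZMod p)).comp ((Pi.evalRingHom (fun _ => ℤ) E.out).comp R.subtype)) ?_
  have key : ((Int.castRingHom (ZMod p)).comp
      ((Pi.evalRingHom (fun _ => ℤ) E.out).comp R.subtype)) ((p : R)) = 0 := by
    simp [map_natCast]
  intro a ha
  rw [Ideal.mem_span_singleton] at ha
  obtain ⟨c, rfl⟩ := ha
  rw [map_mul, key, zero_mul]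

/-- `k_E`: the `R̄`-module `𝔽_p` where `r` acts through multiplication by `r i mod p`,
for `i` any element of the class `E`. -/
def kE (E : Quotient (simPSetoid R p)) : ModuleCat (R ⧸ Ideal.span {(p : R)}) :=
  letI : Module (R ⧸ Ideal.span {(p : R)}) (ZMod p) := Module.compHom (ZMod p) (kEhom R p E)
  ModuleCat.of _ (ZMod p)

-- AUX START

lemma kEhom_mk (E : Quotient (simPSetoid R p)) (r : R) :
    kEhom R p E (Ideal.Quotient.mk _ r) = (((r : I → ℤ) E.out : ℤ) : ZMod p) := by
  simp [kEhom]

lemma kEhom_surjective (hp : p.Prime) (E : Quotient (simPSetoid R p)) :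
    Function.Surjective (kEhom R p E) := by
  haveI : NeZero p := ⟨hp.ne_zero⟩
  intro x
  obtain ⟨n, rfl⟩ := ZMod.natCast_zmod_surjective (n := p) x
  exact ⟨(n : R ⧸ Ideal.span {(p : R)}), by rw [map_natCast]⟩

lemma pow_mem_span [Fintype I] (r : R) (h : ∀ i, (p : ℤ) ∣ (r : I → ℤ) i) :
    ∃ n, (r : R) ^ n ∈ Ideal.span {(p : R)} := by
  set P : I → ℤ := ((p : ℕ) : I → ℤ) with hP
  set s : I → ℤ := fun i => (r : I → ℤ) i / p with hs
  have hrs : (r : I → ℤ) = P * s := by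
    funext i
    show (r : I → ℤ) i = P i * s i
    rw [hP, hs]
    simp only [Pi.natCast_apply]
    exact (Int.mul_ediv_cancel' (h i)).symm
  have hint : IsIntegral ℤ s := IsIntegral.of_finite ℤ s
  obtain ⟨q, hq, hq0⟩ := hint
  set n := q.natDegree with hn
  rcases Nat.eq_zero_or_pos n with h0 | hpos
  · have hq1 : q = 1 := hq.natDegree_eq_zero.mp h0
    rw [hq1] at hq0
    simp only [Polynomial.eval₂_one] at hq0
    haveI : Subsingleton (I → ℤ) := subsingleton_of_zero_eq_one hq0.symm
    exact ⟨1, by rw [Ideal.mem_span_singleton]; exact ⟨1, Subtype.ext (Subsingleton.elim _ _)⟩⟩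
  · have hsum := Polynomial.aeval_eq_sum_range (R := ℤ) (p := q) s
    rw [Polynomial.aeval_def, hq0] at hsum
    rw [← hn, Finset.sum_range_succ] at hsum
    rw [show q.coeff n = 1 from hq.coeff_natDegree, one_smul] at hsum
    have hsn : s ^ n = -∑ k ∈ Finset.range n, q.coeff k • s ^ k := by
      rw [eq_neg_iff_add_eq_zero, add_comm]
      exact hsum.symm
    refine ⟨n, Ideal.mem_span_singleton.mpr ?_⟩
    refine ⟨-∑ k ∈ Finset.range n, ((q.coeff k : R)) * (p : R) ^ (n - 1 - k) * r ^ k, ?_⟩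
    apply Subtype.ext
    push_cast
    rw [hrs, mul_pow, hsn, mul_neg, mul_neg, neg_inj, Finset.mul_sum, Finset.mul_sum]
    refine Finset.sum_congr rfl fun k hk => ?_
    have hk' : k < n := Finset.mem_range.mp hk
    set m := n - 1 - k with hm
    have hexp : n = 1 + m + k := by omega
    rw [zsmul_eq_mul, mul_pow, hexp, pow_add, pow_add, pow_one]
    push_cast
    ring

-- continuation fragment; appended for testing
lemma kEhom_ker_nil [Fintype I] (x : R ⧸ Ideal.span {(p : R)})
    (hx : ∀ E, kEhom R p E x = 0) : IsNilpotent x := by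
  obtain ⟨r, rfl⟩ := Ideal.Quotient.mk_surjective x
  have h : ∀ i, (p : ℤ) ∣ (r : I → ℤ) i := by
    intro i
    set E : Quotient (simPSetoid R p) := Quotient.mk (simPSetoid R p) i with hE
    have h1 := hx E
    rw [kEhom_mk, ZMod.intCast_zmod_eq_zero_iff_dvd] at h1
    have h2 : SimP R p E.out i := Quotient.exact (Quotient.out_eq E)
    have h3 := h2 (r : I → ℤ) r.2
    have := dvd_sub h1 h3
    rwa [sub_sub_cancel] at this
  obtain ⟨n, hn⟩ := pow_mem_span R p r h
  exact ⟨n, by rw [← map_pow, Ideal.Quotient.eq_zero_iff_mem]; exact hn⟩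

lemma ker_kEhom_sep (E E' : Quotient (simPSetoid R p)) (hne : E ≠ E') :
    ∃ a, a ∈ RingHom.ker (kEhom R p E') ∧ a ∉ RingHom.ker (kEhom R p E) := by
  have hsim : ¬ SimP R p E.out E'.out := fun hsim => hne (Quotient.out_equiv_out.mp hsim)
  rw [SimP] at hsim; push_neg at hsim
  obtain ⟨r, hr, hd⟩ := hsim
  have hc : ((r E'.out : ℤ) : I → ℤ) ∈ R := intCast_mem R _
  refine ⟨Ideal.Quotient.mk _ ⟨r - ((r E'.out : ℤ) : I → ℤ), sub_mem hr hc⟩, ?_, ?_⟩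
  · rw [RingHom.mem_ker, kEhom_mk]
    simp
  · rw [RingHom.mem_ker, kEhom_mk]
    intro hzero
    rw [ZMod.intCast_zmod_eq_zero_iff_dvd] at hzero
    apply hd
    simpa using hzero

lemma ker_kEhom_isMaximal (hp : p.Prime) (E : Quotient (simPSetoid R p)) :
    (RingHom.ker (kEhom R p E)).IsMaximal := by
  haveI : Fact p.Prime := ⟨hp⟩
  exact RingHom.ker_isMaximal_of_surjective _ (kEhom_surjective R p hp E)

lemma maximal_eq_ker [Fintype I] (hp : p.Prime) (M : Ideal (R ⧸ Ideal.span {(p : R)}))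
    (hM : M.IsMaximal) : ∃ E, RingHom.ker (kEhom R p E) = M := by
  by_contra hcon
  push_neg at hcon
  haveI : Fintype (Quotient (simPSetoid R p)) := Fintype.ofFinite _
  have ha : ∀ E : Quotient (simPSetoid R p), ∃ a, a ∈ RingHom.ker (kEhom R p E) ∧ a ∉ M := by
    intro E
    have hle : ¬ RingHom.ker (kEhom R p E) ≤ M := fun hle =>
      hcon E ((ker_kEhom_isMaximal R p hp E).eq_of_le hM.ne_top hle)
    obtain ⟨a, h1, h2⟩ := SetLike.not_le_iff_exists.mp hle
    exact ⟨a, h1, h2⟩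
  choose a haker haM using ha
  set x := ∏ E : Quotient (simPSetoid R p), a E with hx
  have hxker : ∀ E, kEhom R p E x = 0 := by
    intro E
    rw [hx, map_prod]
    exact Finset.prod_eq_zero (Finset.mem_univ E) (haker E)
  obtain ⟨n, hn⟩ := kEhom_ker_nil R p x hxker
  have hxM : x ∈ M := hM.isPrime.mem_of_pow_mem n (hn ▸ M.zero_mem)
  obtain ⟨E, _, hEM⟩ := (Ideal.IsPrime.prod_mem_iff).mp hxM
  exact haM E hEM

def kElin (E : Quotient (simPSetoid R p)) :
    (R ⧸ Ideal.span {(p : R)}) →ₗ[R ⧸ Ideal.span {(p : R)}] kE R p E where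
  toFun := kEhom R p E
  map_add' x y := map_add _ x y
  map_smul' a b := by
    show kEhom R p E (a * b) = _
    rw [map_mul]
    rfl

lemma kElin_surjective (hp : p.Prime) (E : Quotient (simPSetoid R p)) :
    Function.Surjective (kElin R p E) :=
  kEhom_surjective R p hp E

lemma kElin_ker (E : Quotient (simPSetoid R p)) :
    LinearMap.ker (kElin R p E) = RingHom.ker (kEhom R p E) := by
  ext x
  exact Iff.rfl

lemma quot_ker_equiv (hp : p.Prime) (E : Quotient (simPSetoid R p)) :
    Nonempty (((R ⧸ Ideal.span {(p : R)}) ⧸ RingHom.ker (kEhom R p E))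
      ≃ₗ[R ⧸ Ideal.span {(p : R)}] kE R p E) :=
  ⟨(kElin_ker R p E) ▸ LinearMap.quotKerEquivOfSurjective (kElin R p E)
      (kElin_surjective R p hp E)⟩

lemma kE_simple (hp : p.Prime) (E : Quotient (simPSetoid R p)) :
    IsSimpleModule (R ⧸ Ideal.span {(p : R)}) (kE R p E) := by
  obtain ⟨e⟩ := quot_ker_equiv R p hp E
  haveI : IsSimpleModule (R ⧸ Ideal.span {(p : R)})
      ((R ⧸ Ideal.span {(p : R)}) ⧸ RingHom.ker (kEhom R p E)) :=
    isSimpleModule_iff_isCoatom.mpr (Ideal.isMaximal_def.mp (ker_kEhom_isMaximal R p hp E))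
  exact IsSimpleModule.congr e.symm

lemma simple_equiv_kE [Fintype I] (hp : p.Prime) (M : Type)
    [AddCommGroup M] [Module (R ⧸ Ideal.span {(p : R)}) M]
    (hM : IsSimpleModule (R ⧸ Ideal.span {(p : R)}) M) :
    ∃ E, Nonempty (M ≃ₗ[R ⧸ Ideal.span {(p : R)}] kE R p E) := by
  obtain ⟨J, hJ, ⟨e⟩⟩ := isSimpleModule_iff_quot_maximal.mp hM
  obtain ⟨E, hE⟩ := maximal_eq_ker R p hp J hJ
  obtain ⟨e2⟩ := quot_ker_equiv R p hp E
  rw [hE] at e2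
  exact ⟨E, ⟨e.trans e2⟩⟩

lemma kE_iso_eq (hp : p.Prime) (E E' : Quotient (simPSetoid R p))
    (h : Nonempty (kE R p E ≅ kE R p E')) : E = E' := by
  haveI : Fact p.Prime := ⟨hp⟩
  obtain ⟨iso⟩ := h
  have g := iso.toLinearEquiv
  by_contra hne
  obtain ⟨a, haE', haE⟩ := ker_kEhom_sep R p E E' hne
  set h := (g.symm.toLinearMap).comp (kElin R p E') with hh
  have hone : kElin R p E' 1 ≠ 0 := by
    show kEhom R p E' 1 ≠ (0 : ZMod p)
    rw [map_one]
    exact one_ne_zero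
  have hh1 : h 1 ≠ 0 := by
    rw [hh]
    simp only [LinearMap.comp_apply]
    intro hcon
    exact hone (by simpa using g.symm.injective (by simpa using hcon))
  obtain ⟨c, hc⟩ := kElin_surjective R p hp E (h 1)
  have hfc : kEhom R p E c ≠ 0 := by
    intro hcon
    apply hh1
    rw [← hc]
    show kEhom R p E c = (0 : ZMod p)
    exact hcon
  have hha : h a = 0 := by
    rw [hh]
    simp only [LinearMap.comp_apply]
    have : kElin R p E' a = 0 := by
      show kEhom R p E' a = (0 : ZMod p)
      exact haE'
    rw [this, map_zero]
  have hha2 : h a = kElin R p E (a * c) := by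
    have h1 : h a = a • h 1 := by
      conv_lhs => rw [show a = a • (1 : R ⧸ Ideal.span {(p : R)}) by rw [smul_eq_mul, mul_one]]
      rw [map_smul]
    rw [h1, ← hc, ← map_smul, smul_eq_mul]
  have : kEhom R p E (a * c) = 0 := by
    have := hha2.symm.trans hha
    exact this
  rw [map_mul] at this
  rcases mul_eq_zero.mp this with h' | h'
  · exact haE h'
  · exact hfc h'


/-- Let `R ⊆ Gh(I)` be a B-ring, `p` a prime, `k = 𝔽_p`, `R̄ = R/pR`, `𝓔` the set of
equivalence classes of `∼_p` on `I`.  Then `R̄` has exactly `|𝓔|` maximal ideals, every simple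
`R̄`-module is one-dimensional over `k` (i.e. has exactly `p` elements), and the modules `k_E`
for `E ∈ 𝓔` form a complete irredundant set of simple `R̄`-modules. -/
theorem stmt_6 (I : Type) [Fintype I] (R : Subring (I → ℤ)) (hR : IsBRing R)
    (p : ℕ) (hp : p.Prime) :
    Nat.card {M : Ideal (R ⧸ Ideal.span {(p : R)}) // M.IsMaximal} =
        Nat.card (Quotient (simPSetoid R p)) ∧
    (∀ (M : Type) [AddCommGroup M] [Module (R ⧸ Ideal.span {(p : R)}) M],
        IsSimpleModule (R ⧸ Ideal.span {(p : R)}) M → Nat.card M = p) ∧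
    (∀ E : Quotient (simPSetoid R p), IsSimpleModule (R ⧸ Ideal.span {(p : R)}) (kE R p E)) ∧
    (∀ M : ModuleCat (R ⧸ Ideal.span {(p : R)}),
        IsSimpleModule (R ⧸ Ideal.span {(p : R)}) M →
          ∃ E : Quotient (simPSetoid R p), Nonempty (M ≅ kE R p E)) ∧
    (∀ E E' : Quotient (simPSetoid R p), Nonempty (kE R p E ≅ kE R p E') ↔ E = E') := by
  refine ⟨?_, ?_, fun E => kE_simple R p hp E, ?_, ?_⟩
  · have hbij : Function.Bijective
        (fun E : Quotient (simPSetoid R p) =>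
          (⟨RingHom.ker (kEhom R p E), ker_kEhom_isMaximal R p hp E⟩ :
            {M : Ideal (R ⧸ Ideal.span {(p : R)}) // M.IsMaximal})) := by
      constructor
      · intro E E' hEE'
        have hval : RingHom.ker (kEhom R p E) = RingHom.ker (kEhom R p E') :=
          congrArg Subtype.val hEE'
        by_contra hne
        obtain ⟨a, h1, h2⟩ := ker_kEhom_sep R p E E' hne
        rw [← hval] at h1
        exact h2 h1
      · rintro ⟨M, hM⟩
        obtain ⟨E, hE⟩ := maximal_eq_ker R p hp M hM
        exact ⟨E, Subtype.ext hE⟩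
    exact (Nat.card_congr (Equiv.ofBijective _ hbij)).symm
  · intro M _ _ hM
    obtain ⟨E, ⟨e⟩⟩ := simple_equiv_kE R p hp M hM
    exact (Nat.card_congr e.toEquiv).trans (Nat.card_zmod p)
  · intro M hM
    obtain ⟨E, ⟨e⟩⟩ := simple_equiv_kE R p hp M hM
    exact ⟨E, ⟨e.toModuleIso⟩⟩
  · intro E E'
    exact ⟨fun h => kE_iso_eq R p hp E E' h, fun h => h ▸ ⟨Iso.refl _⟩⟩
end
end

section
/- Let R ⊆ Gh(I) be a B-ring and p a prime such that p ∤ d(i, j) for every pair of distinct i, j ∈ I. Then the 𝔽_p-algebra R/pR is semisimple, and is isomorphic to a product of |I| copies of 𝔽_p. -/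
set_option synthInstance.maxHeartbeats 400000
set_option maxHeartbeats 1000000

-- Aux lemma 1: the evaluation-mod-p hom is surjective.
theorem aux_surj (I : Type) [Fintype I] (p : ℕ) (hp : p.Prime)
    (S : Subring (I → ZMod p))
    (hsep : ∀ i j : I, i ≠ j → ∃ s ∈ S, s i = 1 ∧ s j = 0) :
    S = ⊤ := by
  haveI : Fact p.Prime := ⟨hp⟩
  classical
  -- constants belong to S
  have hconst : ∀ c : ZMod p, (fun _ : I => c) ∈ S := by
    intro c
    have : ((c.val : I → ZMod p)) ∈ S := natCast_mem S c.val
    have he : ((c.val : I → ZMod p)) = fun _ : I => c := by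
      funext k
      simp [Pi.natCast_apply, ZMod.natCast_val]
    rwa [he] at this
  -- indicator functions
  have hind : ∀ i : I, ∃ g ∈ S, g i = 1 ∧ ∀ j ≠ i, g j = 0 := by
    intro i
    choose t ht hti htj using fun j (hj : j ≠ i) => hsep i j (Ne.symm hj)
    set t' : I → (I → ZMod p) := fun j => if h : j = i then 1 else t j h with ht'
    have ht'S : ∀ j, t' j ∈ S := by
      intro j; by_cases h : j = i <;> simp [ht', h, ht, S.one_mem]
    have ht'i : ∀ j, t' j i = 1 := by
      intro j; by_cases h : j = i <;> simp [ht', h, hti, Pi.one_apply]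
    have ht'j : ∀ j, j ≠ i → t' j j = 0 := by
      intro j h; simp [ht', h, htj]
    refine ⟨∏ j ∈ Finset.univ.erase i, t' j, S.prod_mem (fun j _ => ht'S j), ?_, ?_⟩
    · rw [Finset.prod_apply]
      exact Finset.prod_eq_one fun j _ => ht'i j
    · intro j hj
      rw [Finset.prod_apply]
      exact Finset.prod_eq_zero (Finset.mem_erase.2 ⟨hj, Finset.mem_univ j⟩) (ht'j j hj)
  ext v
  simp only [Subring.mem_top, iff_true]
  choose g hgS hgi hgj using hind
  have hv : v = ∑ i : I, (fun _ => v i) * g i := by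
    funext k
    rw [Finset.sum_apply]
    rw [Finset.sum_eq_single k]
    · simp [hgi k]
    · intro j _ hj; simp [hgj j k (by exact fun h => hj (h ▸ rfl))]
    · intro h; exact absurd (Finset.mem_univ k) h
  rw [hv]
  exact S.sum_mem fun i _ => S.mul_mem (hconst (v i)) (hgS i)

/-- Let `R ⊆ Gh(I)` be a B-ring and `p` a prime with `p ∤ d(i, j)` for all distinct
`i, j ∈ I`, where `d(i, j)` is the greatest positive integer dividing `r i - r j` for all
`r ∈ R`.  Then the `𝔽_p`-algebra `R̄ = R/pR` is semisimple, and is isomorphic to a product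
of `|I|` copies of `𝔽_p`. -/
theorem stmt_9 (I : Type) [Fintype I] (R : Subring (I → ℤ)) (hR : IsBRing R)
    (p : ℕ) (hp : p.Prime)
    (d : I → I → ℕ)
    (hd0 : ∀ i j : I, i ≠ j → 0 < d i j)
    (hddvd : ∀ i j : I, i ≠ j → ∀ r ∈ R, (d i j : ℤ) ∣ (r i - r j))
    (hdmax : ∀ i j : I, i ≠ j → ∀ e : ℕ, 0 < e → (∀ r ∈ R, (e : ℤ) ∣ (r i - r j)) → e ≤ d i j)
    (hpd : ∀ i j : I, i ≠ j → ¬ (p ∣ d i j)) :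
    IsSemisimpleRing (R ⧸ Ideal.span {(p : R)}) ∧
    Nonempty ((R ⧸ Ideal.span {(p : R)}) ≃+* (I → ZMod p)) := by
  classical
  haveI : Fact p.Prime := ⟨hp⟩
  haveI : NeZero p := ⟨hp.ne_zero⟩
  -- the evaluation mod p homomorphism
  set φ : R →+* (I → ZMod p) :=
    (Pi.ringHom fun i => (Int.castRingHom (ZMod p)).comp (Pi.evalRingHom (fun _ => ℤ) i)).comp
      R.subtype with hφdef
  have hφ : ∀ (r : R) (i : I), φ r i = ((r : I → ℤ) i : ZMod p) := fun r i => rfl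
  -- Step 1: φ is surjective
  have hsurj : Function.Surjective φ := by
    have hrange : φ.range = ⊤ := by
      apply aux_surj I p hp
      intro i j hij
      -- find r in R with p not dividing r i - r j
      have hex : ∃ r ∈ R, ¬ ((p : ℤ) ∣ (r i - r j)) := by
        by_contra hcon
        push_neg at hcon
        have hdvd : ∀ r ∈ R, ((p * d i j : ℕ) : ℤ) ∣ (r i - r j) := by
          intro r hr
          have hcop : IsCoprime (p : ℤ) (d i j : ℤ) := by
            rw [Int.isCoprime_iff_gcd_eq_one]
            simpa [Int.gcd_natCast_natCast] using (hp.coprime_iff_not_dvd).mpr (hpd i j hij)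
          push_cast
          exact hcop.mul_dvd (hcon r hr) (hddvd i j hij r hr)
        have := hdmax i j hij (p * d i j)
          (Nat.mul_pos hp.pos (hd0 i j hij)) hdvd
        nlinarith [hd0 i j hij, hp.two_le]
      obtain ⟨r, hrR, hrp⟩ := hex
      set a : ZMod p := ((r i - r j : ℤ) : ZMod p) with ha
      have ha0 : a ≠ 0 := by
        rw [ha, Ne, ZMod.intCast_zmod_eq_zero_iff_dvd]
        exact_mod_cast hrp
      refine ⟨(fun _ => a⁻¹) * (φ ⟨r, hrR⟩ - (fun _ => ((r j : ℤ) : ZMod p))), ?_, ?_, ?_⟩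
      · refine Subring.mul_mem _ ?_ (Subring.sub_mem _ ⟨⟨r, hrR⟩, rfl⟩ ?_)
        · -- constant a⁻¹
          have : (((a⁻¹).val : ℕ) : (I → ZMod p)) ∈ φ.range := natCast_mem _ _
          convert this using 1
          funext k
          simp [Pi.natCast_apply, ZMod.natCast_val]
        · -- constant (r j : ZMod p): image of constant integer
          refine ⟨⟨(fun _ => r j : I → ℤ), ?_⟩, ?_⟩
          · -- constant integer is in R: it is intCast
            have : (((r j : ℤ) : (I → ℤ))) ∈ R := intCast_mem R (r j)
            convert this using 1
            funext k; simp
          · funext k; simp [hφ]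
      · simp only [Pi.mul_apply, Pi.sub_apply, hφ]
        rw [show ((r i : ℤ) : ZMod p) - ((r j : ℤ) : ZMod p) = a by rw [ha]; push_cast; ring]
        exact inv_mul_cancel₀ ha0
      · simp [hφ]
    intro v
    have : v ∈ φ.range := hrange ▸ Subring.mem_top v
    exact this
  -- Step 2: the induced map on the quotient
  set J := Ideal.span {(p : R)} with hJ
  have hker : ∀ a ∈ J, φ a = 0 := by
    intro a haJ
    rw [hJ, Ideal.mem_span_singleton] at haJ
    obtain ⟨c, rfl⟩ := haJ
    rw [map_mul]
    have hp0 : φ (p : R) = 0 := by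
      rw [map_natCast]
      funext k; simp [ZMod.natCast_self]
    rw [hp0, zero_mul]
  set ψ : (R ⧸ J) →+* (I → ZMod p) := Ideal.Quotient.lift J φ hker with hψ
  have hψsurj : Function.Surjective ψ := by
    intro v; obtain ⟨r, hr⟩ := hsurj v
    exact ⟨Ideal.Quotient.mk J r, by rw [hψ]; simpa using hr⟩
  -- Step 3: cardinality bound on the quotient
  have hp0 : ∀ q : R ⧸ J, p • q = 0 := by
    intro q
    obtain ⟨r, rfl⟩ := Ideal.Quotient.mk_surjective q
    rw [← map_nsmul, nsmul_eq_mul, Ideal.Quotient.eq_zero_iff_mem]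
    exact Ideal.mul_mem_right _ _ (Ideal.subset_span rfl)
  set M : Submodule ℤ (I → ℤ) := AddSubgroup.toIntSubmodule R.toAddSubgroup with hM
  set m := Module.finrank ℤ M with hm
  have hmle : m ≤ Fintype.card I := by
    have h1 := M.finrank_le
    rwa [Module.finrank_pi] at h1
  let b : Module.Basis (Fin m) ℤ M := Module.finBasis ℤ M
  let ℓ : (Fin m → ℤ) ≃ₗ[ℤ] M := b.equivFun.symm
  have hmem : ∀ x : M, (x : I → ℤ) ∈ R := fun x => x.2
  let ρ : M →+ (R ⧸ J) :=
    { toFun := fun x => Ideal.Quotient.mk J ⟨x.1, hmem x⟩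
      map_zero' := by
        have h0 : (⟨(0 : M).1, hmem 0⟩ : R) = 0 := Subtype.ext rfl
        exact (congrArg (Ideal.Quotient.mk J) h0).trans (map_zero _)
      map_add' := by
        intro x y
        have hxy : (⟨(x + y).1, hmem (x + y)⟩ : R) = ⟨x.1, hmem x⟩ + ⟨y.1, hmem y⟩ :=
          Subtype.ext rfl
        exact (congrArg (Ideal.Quotient.mk J) hxy).trans (map_add _ _ _) }
  let h : (Fin m → ℤ) →+ (R ⧸ J) := ρ.comp ℓ.toLinearMap.toAddMonoidHom
  have hhsurj : Function.Surjective h := by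
    intro q
    obtain ⟨r, rfl⟩ := Ideal.Quotient.mk_surjective q
    refine ⟨ℓ.symm ⟨(r : I → ℤ), r.2⟩, ?_⟩
    show ρ (ℓ (ℓ.symm _)) = _
    rw [ℓ.apply_symm_apply]
    exact congrArg _ (Subtype.ext rfl)
  let h' : (Fin m → ZMod p) → (R ⧸ J) := fun v => h (fun k => ((v k).val : ℤ))
  have hh'surj : Function.Surjective h' := by
    intro q
    obtain ⟨y, hy⟩ := hhsurj q
    refine ⟨fun k => ((y k : ℤ) : ZMod p), ?_⟩
    have hdvd : ∀ k, (p : ℤ) ∣ ((((y k : ℤ) : ZMod p)).val : ℤ) - y k := by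
      intro k
      rw [← ZMod.intCast_zmod_eq_zero_iff_dvd]
      push_cast
      simp [ZMod.natCast_val, ZMod.cast_id]
    set z : Fin m → ℤ := fun k => (((((y k : ℤ) : ZMod p)).val : ℤ) - y k) / p with hz
    have heq : (fun k => (((((y k : ℤ) : ZMod p))).val : ℤ)) = y + p • z := by
      funext k
      simp only [Pi.add_apply, Pi.smul_apply, hz, nsmul_eq_mul, Pi.mul_apply, Pi.natCast_apply]
      rw [Int.mul_ediv_cancel' (hdvd k)]
      ring
    show h _ = q
    rw [heq, map_add, hy, map_nsmul, hp0, add_zero]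
  haveI hfin : Finite (R ⧸ J) := Finite.of_surjective h' hh'surj
  have hcard1 : Nat.card (R ⧸ J) ≤ p ^ m := by
    have := Nat.card_le_card_of_surjective h' hh'surj
    simpa [Nat.card_eq_fintype_card, Fintype.card_fun, ZMod.card] using this
  have hcard2 : Nat.card (I → ZMod p) = p ^ Fintype.card I := by
    simp [Nat.card_eq_fintype_card, Fintype.card_fun, ZMod.card]
  have hcardle : Nat.card (R ⧸ J) ≤ Nat.card (I → ZMod p) := by
    rw [hcard2]
    exact hcard1.trans (Nat.pow_le_pow_right hp.pos hmle)
  have hbij : Function.Bijective ψ := hψsurj.bijective_of_nat_card_le hcardle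
  let e : (R ⧸ J) ≃+* (I → ZMod p) := RingEquiv.ofBijective ψ hbij
  exact ⟨e.symm.isSemisimpleRing, ⟨e⟩⟩
end

section
/- Let G be a finite group and let H, J be non-conjugate subgroups of G. Then there exist finite G-sets X and Y such that |X^J| = |Y^J| but |X^H| ≠ |Y^H|. (Equivalently, the mark homomorphisms realize the Burnside ring A(G) as a B-ring inside ∏_{(H)∈ccs(G)} ℤ.) -/
/-- Two subgroups of `G` are conjugate if one is `g H g⁻¹` for some `g ∈ G`. -/
def IsConjSubgroup {G : Type*} [Group G] (H J : Subgroup G) : Prop :=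
  ∃ g : G, Subgroup.map (MulAut.conj g).toMonoidHom H = J

/-- The Burnside ring `A(G)` of a finite group `G`, realized via the mark homomorphisms as the
subring of the ghost ring `∏_{H ≤ G} ℤ` generated by the mark vectors
`H ↦ |X^H|` of finite `G`-sets `X`.  (Marks are constant on conjugacy classes, so this is the
image of the usual embedding `A(G) → ∏_{(H) ∈ ccs(G)} ℤ`.) -/
def burnsideRing (G : Type) [Group G] : Subring ((Subgroup G) → ℤ) :=
  Subring.closure { f | ∃ (X : Type) (_ : Fintype X) (_ : MulAction G X),
    f = fun H : Subgroup G => (Nat.card (MulAction.fixedPoints H X) : ℤ) }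

lemma mem_fp_quot {G : Type} [Group G] (H J : Subgroup G) (x : G) :
    (↑x : G ⧸ H) ∈ MulAction.fixedPoints J (G ⧸ H) ↔
      J ≤ Subgroup.map (MulAut.conj x).toMonoidHom H := by
  constructor
  · intro hx j hj
    have := hx ⟨j, hj⟩
    change (j : G) • (↑x : G ⧸ H) = ↑x at this
    simp only [Subgroup.mk_smul, MulAction.Quotient.smul_mk, QuotientGroup.eq] at this
    refine ⟨x⁻¹ * j * x, ?_, ?_⟩
    · simpa [mul_assoc] using H.inv_mem this
    · simp [MulAut.conj, mul_assoc]
  · intro hle j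
    obtain ⟨h, hh, hj⟩ := hle j.2
    show (j : G) • (↑x : G ⧸ H) = ↑x
    simp only [MulAction.Quotient.smul_mk, QuotientGroup.eq]
    have : (j : G) = x * h * x⁻¹ := by
      rw [← hj]; simp [MulAut.conj]
    rw [this]
    simpa [mul_assoc] using H.inv_mem hh

lemma fp_quot_empty {G : Type} [Group G] (H J : Subgroup G)
    (h : ¬ ∃ g : G, J ≤ Subgroup.map (MulAut.conj g).toMonoidHom H) :
    MulAction.fixedPoints J (G ⧸ H) = ∅ := by
  ext q
  induction q using QuotientGroup.induction_on with
  | H x => simp only [Set.mem_empty_iff_false, iff_false, mem_fp_quot]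
           exact fun hx => h ⟨x, hx⟩

lemma fp_quot_self_nonempty {G : Type} [Group G] (H : Subgroup G) :
    ((1 : G) : G ⧸ H) ∈ MulAction.fixedPoints H (G ⧸ H) := by
  rw [mem_fp_quot]
  intro h hh
  exact ⟨h, hh, by simp [MulAut.conj]⟩

instance trivAction (G : Type) [Group G] (n : ℕ) : MulAction G (Fin n) where
  smul _ x := x
  one_smul _ := rfl
  mul_smul _ _ _ := rfl

lemma fp_triv (G : Type) [Group G] (n : ℕ) (K : Subgroup G) :
    Nat.card (MulAction.fixedPoints K (Fin n)) = n := by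
  have : MulAction.fixedPoints K (Fin n) = Set.univ := by
    ext x; simp only [Set.mem_univ, iff_true, MulAction.mem_fixedPoints]; intro g; rfl
  rw [this]
  simpa using Nat.card_congr (Equiv.Set.univ (Fin n))


/-- Let `G` be a finite group and `H, J` non-conjugate subgroups of `G`.  Then there are finite
`G`-sets `X` and `Y` with `|X^J| = |Y^J|` but `|X^H| ≠ |Y^H|`; equivalently, the mark
homomorphisms realize the Burnside ring `A(G)` as a B-ring inside the ghost ring. -/
theorem stmt_12 (G : Type) [Group G] [Finite G] (H J : Subgroup G)
    (hHJ : ¬ IsConjSubgroup H J) :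
    (∃ (X Y : Type) (_ : Fintype X) (_ : Fintype Y) (_ : MulAction G X) (_ : MulAction G Y),
      Nat.card (MulAction.fixedPoints J X) = Nat.card (MulAction.fixedPoints J Y) ∧
      Nat.card (MulAction.fixedPoints H X) ≠ Nat.card (MulAction.fixedPoints H Y)) ∧
    (∃ r ∈ burnsideRing G, r H ≠ 0 ∧ r J = 0) := by
  classical
  have key : ¬ (∃ g : G, J ≤ Subgroup.map (MulAut.conj g).toMonoidHom H) ∨
      ¬ (∃ g : G, H ≤ Subgroup.map (MulAut.conj g).toMonoidHom J) := by
    by_contra hc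
    push_neg at hc
    obtain ⟨⟨g, hg⟩, ⟨k, hk⟩⟩ := hc
    have cardmap : ∀ (K : Subgroup G) (x : G),
        Nat.card (Subgroup.map (MulAut.conj x).toMonoidHom K) = Nat.card K := by
      intro K x
      exact (Nat.card_congr (K.equivMapOfInjective _ (MulAut.conj x).injective).toEquiv).symm
    have h1 : Nat.card J ≤ Nat.card H := by
      rw [← cardmap H g]; exact Subgroup.card_le_of_le hg
    have h2 : Nat.card H ≤ Nat.card J := by
      rw [← cardmap J k]; exact Subgroup.card_le_of_le hk
    have : Subgroup.map (MulAut.conj g).toMonoidHom H = J := by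
      refine (Subgroup.eq_of_le_of_card_ge hg ?_).symm
      rw [cardmap H g]; omega
    exact hHJ ⟨g, this⟩
  have : ∀ (K : Subgroup G), Fintype (G ⧸ K) := fun K => Fintype.ofFinite _
  rcases key with hcase | hcase
  · -- J not subconjugate to H : use X = G ⧸ H, Y = Fin 0
    have hJ0 : Nat.card (MulAction.fixedPoints J (G ⧸ H)) = 0 := by
      rw [fp_quot_empty H J hcase]; simp
    have hHpos : 0 < Nat.card (MulAction.fixedPoints H (G ⧸ H)) :=
      Nat.card_pos_iff.mpr ⟨⟨_, fp_quot_self_nonempty H⟩, Set.toFinite _⟩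
    refine ⟨⟨G ⧸ H, Fin 0, this H, inferInstance, inferInstance, trivAction G 0, ?_, ?_⟩, ?_⟩
    · rw [fp_triv]; exact hJ0
    · rw [fp_triv]; exact hHpos.ne'
    · refine ⟨fun K : Subgroup G => (Nat.card (MulAction.fixedPoints K (G ⧸ H)) : ℤ),
        Subring.subset_closure ⟨G ⧸ H, this H, inferInstance, rfl⟩, ?_, ?_⟩
      · simpa using hHpos.ne'
      · show ((Nat.card (MulAction.fixedPoints J (G ⧸ H)) : ℤ)) = 0; exact_mod_cast hJ0
  · -- H not subconjugate to J : use X = G ⧸ J, Y = Fin m trivial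
    set m := Nat.card (MulAction.fixedPoints J (G ⧸ J)) with hm
    have hH0 : Nat.card (MulAction.fixedPoints H (G ⧸ J)) = 0 := by
      rw [fp_quot_empty J H hcase]; simp
    have hmpos : 0 < m :=
      Nat.card_pos_iff.mpr ⟨⟨_, fp_quot_self_nonempty J⟩, Set.toFinite _⟩
    refine ⟨⟨G ⧸ J, Fin m, this J, inferInstance, inferInstance, trivAction G m, ?_, ?_⟩, ?_⟩
    · rw [fp_triv]; exact hm.symm
    · rw [fp_triv]; exact hH0.trans_ne hmpos.ne
    · refine ⟨(fun K : Subgroup G => (Nat.card (MulAction.fixedPoints K (Fin m)) : ℤ)) -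
        (fun K : Subgroup G => (Nat.card (MulAction.fixedPoints K (G ⧸ J)) : ℤ)),
        sub_mem (Subring.subset_closure ⟨Fin m, inferInstance, trivAction G m, rfl⟩)
          (Subring.subset_closure ⟨G ⧸ J, this J, inferInstance, rfl⟩), ?_, ?_⟩
      · simp only [Pi.sub_apply, fp_triv, hH0]
        simpa using hmpos.ne'
      · simp only [Pi.sub_apply, fp_triv, ← hm, sub_self]
end

section
/- Let G be a finite group, let H and J be non-conjugate subgroups of G, and let d be a positive integer such that d divides |X^H| − |X^J| for every finite G-set X. Then d divides |G|. (Equivalently, d(H, J) divides |G| in the Burnside ring A(G) regarded as a B-ring via the mark homomorphisms.) -/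
section aux

variable {G : Type} [Group G] [Finite G]

lemma aux_card_map_conj (H : Subgroup G) (g : G) :
    Nat.card (Subgroup.map (MulAut.conj g).toMonoidHom H) = Nat.card H :=
  (Nat.card_congr (H.equivMapOfInjective _ (MulAut.conj g).injective).toEquiv).symm

/-- If a coset space `G ⧸ H` has a `J`-fixed point, then `J` is subconjugate to `H`. -/
lemma aux_subconj_of_fixed {H J : Subgroup G} (x : G ⧸ H)
    (hx : x ∈ MulAction.fixedPoints J (G ⧸ H)) :
    ∃ g : G, Subgroup.map (MulAut.conj g).toMonoidHom J ≤ H := by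
  obtain ⟨g, rfl⟩ := QuotientGroup.mk_surjective x
  refine ⟨g⁻¹, ?_⟩
  rintro y ⟨j, hj, rfl⟩
  have := hx ⟨j⁻¹, inv_mem hj⟩
  have h2 : ((j⁻¹ * g : G) : G ⧸ H) = (g : G ⧸ H) := this
  rw [QuotientGroup.eq] at h2
  simpa [mul_assoc] using h2

/-- If the fixed points of `J` on `G ⧸ H` are nonempty... contrapositive form: -/
lemma aux_fixed_empty {H J : Subgroup G}
    (h : ¬ ∃ g : G, Subgroup.map (MulAut.conj g).toMonoidHom J ≤ H) :
    Nat.card (MulAction.fixedPoints J (G ⧸ H)) = 0 := by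
  rw [Nat.card_eq_zero]
  left
  rw [isEmpty_subtype]
  intro x hx
  exact h (aux_subconj_of_fixed x hx)

lemma aux_card_fixed_dvd (H : Subgroup G) :
    Nat.card (MulAction.fixedPoints H (G ⧸ H)) ∣ Nat.card G := by
  rw [Nat.card_congr (Sylow.fixedPointsMulLeftCosetsEquivQuotient H)]
  exact dvd_trans (Subgroup.card_quotient_dvd_card _) (Subgroup.card_subgroup_dvd_card _)

lemma aux_conj_of_both {H J : Subgroup G}
    (h1 : ∃ g : G, Subgroup.map (MulAut.conj g).toMonoidHom J ≤ H)
    (h2 : ∃ g : G, Subgroup.map (MulAut.conj g).toMonoidHom H ≤ J) :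
    IsConjSubgroup H J := by
  obtain ⟨g, hg⟩ := h1
  obtain ⟨k, hk⟩ := h2
  have hcard1 : Nat.card J ≤ Nat.card H := by
    rw [← aux_card_map_conj J g]; exact Subgroup.card_le_of_le hg
  have hcard2 : Nat.card H ≤ Nat.card J := by
    rw [← aux_card_map_conj H k]; exact Subgroup.card_le_of_le hk
  refine ⟨k, Subgroup.eq_of_le_of_card_ge hk ?_⟩
  rw [aux_card_map_conj H k]
  exact hcard1

end aux

/-- Let `G` be a finite group, `H` and `J` non-conjugate subgroups of `G`, and `d` a positive
integer dividing `|X^H| - |X^J|` for every finite `G`-set `X`.  Then `d` divides `|G|`.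
(Equivalently, `d(H, J) ∣ |G|` in the Burnside ring `A(G)` regarded as a B-ring via the mark
homomorphisms.) -/
theorem stmt_13 (G : Type) [Group G] [Finite G] (H J : Subgroup G)
    (hHJ : ¬ IsConjSubgroup H J) (d : ℕ) (hd : 0 < d)
    (hdvd : ∀ (X : Type) (_ : Fintype X) (_ : MulAction G X),
      (d : ℤ) ∣ ((Nat.card (MulAction.fixedPoints H X) : ℤ) -
        (Nat.card (MulAction.fixedPoints J X) : ℤ))) :
    d ∣ Nat.card G := by
  classical
  have : Fintype G := Fintype.ofFinite G
  by_cases hJH : ∃ g : G, Subgroup.map (MulAut.conj g).toMonoidHom J ≤ H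
  · -- then H is not subconjugate to J
    have hHJ' : ¬ ∃ g : G, Subgroup.map (MulAut.conj g).toMonoidHom H ≤ J :=
      fun h => hHJ (aux_conj_of_both hJH h)
    have h0 : Nat.card (MulAction.fixedPoints H (G ⧸ J)) = 0 := aux_fixed_empty hHJ'
    have hX := hdvd (G ⧸ J) inferInstance inferInstance
    erw [h0] at hX
    have : (d : ℤ) ∣ (Nat.card (MulAction.fixedPoints J (G ⧸ J)) : ℤ) := by
      simp only [Nat.cast_zero, zero_sub, dvd_neg] at hX
      exact hX
    have hdfix : d ∣ Nat.card (MulAction.fixedPoints J (G ⧸ J)) := by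
      exact_mod_cast this
    exact hdfix.trans (aux_card_fixed_dvd J)
  · have h0 : Nat.card (MulAction.fixedPoints J (G ⧸ H)) = 0 := aux_fixed_empty hJH
    have hX := hdvd (G ⧸ H) inferInstance inferInstance
    erw [h0] at hX
    have hdfix : d ∣ Nat.card (MulAction.fixedPoints H (G ⧸ H)) := by
      exact_mod_cast (by simp only [Nat.cast_zero, sub_zero] at hX; exact hX : (d : ℤ) ∣ (Nat.card (MulAction.fixedPoints H (G ⧸ H)) : ℤ))
    exact hdfix.trans (aux_card_fixed_dvd H)
end

section
/- Let G be a finite group and p a prime with p² ∤ |G|. If H, J, J' are subgroups of G such that O^p(H), O^p(J), O^p(J') are pairwise conjugate in G, then at least two of H, J, J' are conjugate in G. (Equivalently: every equivalence class of the relation on conjugacy classes of subgroups given by 'O^p-subgroups are conjugate' has cardinality at most 2.) -/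
/-- `O^p(H)`: the smallest normal subgroup `K ⊴ H` with `H/K` a `p`-group, regarded as a
subgroup of `G`. -/
def Op (p : ℕ) {G : Type*} [Group G] (H : Subgroup G) : Subgroup G :=
  (sInf {K : Subgroup H | ∃ _ : K.Normal, IsPGroup p (H ⧸ K)}).map H.subtype

open Subgroup Pointwise

namespace StmtAux

variable {G : Type*} [Group G]

/-- The set of normal subgroups with `p`-group quotient, in an abstract group. -/
def opSet (p : ℕ) (A : Type*) [Group A] : Set (Subgroup A) :=
  {K | ∃ _ : K.Normal, IsPGroup p (A ⧸ K)}

lemma op_eq (p : ℕ) (H : Subgroup G) : Op p H = (sInf (opSet p H)).map H.subtype := rfl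

lemma top_mem_opSet (p : ℕ) (A : Type*) [Group A] : ⊤ ∈ opSet p A := by
  refine ⟨inferInstance, fun q => ⟨0, ?_⟩⟩
  haveI := QuotientGroup.subsingleton_quotient_top (G := A)
  exact Subsingleton.elim _ _

lemma inf_mem_opSet {p : ℕ} {A : Type*} [Group A] {K₁ K₂ : Subgroup A}
    (h₁ : K₁ ∈ opSet p A) (h₂ : K₂ ∈ opSet p A) : K₁ ⊓ K₂ ∈ opSet p A := by
  obtain ⟨n₁, hp₁⟩ := h₁
  obtain ⟨n₂, hp₂⟩ := h₂
  have hn : (K₁ ⊓ K₂).Normal := ⟨fun x hx g => ⟨n₁.conj_mem x hx.1 g, n₂.conj_mem x hx.2 g⟩⟩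
  refine ⟨hn, ?_⟩
  set φ : A →* (A ⧸ K₁) × (A ⧸ K₂) := (QuotientGroup.mk' K₁).prod (QuotientGroup.mk' K₂) with hφ
  have hker : φ.ker = K₁ ⊓ K₂ := by
    rw [hφ, MonoidHom.ker_prod, QuotientGroup.ker_mk', QuotientGroup.ker_mk']
  have hprod : IsPGroup p ((A ⧸ K₁) × (A ⧸ K₂)) := by
    intro x
    obtain ⟨k₁, e1⟩ := hp₁ x.1
    obtain ⟨k₂, e2⟩ := hp₂ x.2
    refine ⟨k₁ + k₂, ?_⟩
    have hx1 : x.1 ^ p ^ (k₁ + k₂) = 1 := by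
      rw [pow_add, pow_mul, e1, one_pow]
    have hx2 : x.2 ^ p ^ (k₁ + k₂) = 1 := by
      rw [add_comm, pow_add, pow_mul, e2, one_pow]
    exact Prod.ext (by simpa using hx1) (by simpa using hx2)
  have h := hprod.of_injective (QuotientGroup.kerLift φ) (QuotientGroup.kerLift_injective φ)
  haveI : (K₁ ⊓ K₂).Normal := hn
  exact h.of_equiv (QuotientGroup.quotientMulEquivOfEq hker)

lemma sInf_opSet_mem (p : ℕ) (A : Type*) [Group A] [Finite A] :
    sInf (opSet p A) ∈ opSet p A := by
  obtain ⟨m, -, hm⟩ := Finite.exists_le_minimal (p := (· ∈ opSet p A)) (top_mem_opSet p A)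
  have hle : ∀ K ∈ opSet p A, m ≤ K := by
    intro K hK
    have h1 : m ⊓ K ∈ opSet p A := inf_mem_opSet hm.1 hK
    exact le_trans (hm.2 h1 inf_le_left) inf_le_right
  have : sInf (opSet p A) = m := le_antisymm (sInf_le hm.1) (le_sInf hle)
  rw [this]
  exact hm.1

lemma map_mem_opSet {p : ℕ} {A B : Type*} [Group A] [Group B] (e : A ≃* B)
    {K : Subgroup A} (hK : K ∈ opSet p A) : K.map (e : A →* B) ∈ opSet p B := by
  obtain ⟨hn, hq⟩ := hK
  haveI : K.Normal := hn
  haveI hn' : (K.map (e : A →* B)).Normal := hn.map (e : A →* B) e.surjective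
  exact ⟨hn', hq.of_equiv (QuotientGroup.congr K (K.map (e : A →* B)) e rfl)⟩

lemma opSet_map (p : ℕ) {A B : Type*} [Group A] [Group B] (e : A ≃* B) :
    ⇑e.mapSubgroup '' opSet p A = opSet p B := by
  ext K
  simp only [Set.mem_image, MulEquiv.mapSubgroup_apply]
  constructor
  · rintro ⟨K', hK', rfl⟩
    exact map_mem_opSet e hK'
  · intro hK
    refine ⟨K.map (e.symm : B →* A), map_mem_opSet e.symm hK, ?_⟩
    have hcomp : (e : A →* B).comp (e.symm : B →* A) = MonoidHom.id B :=
      MonoidHom.ext fun x => e.apply_symm_apply x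
    rw [Subgroup.map_map, hcomp, Subgroup.map_id]

lemma sInf_opSet_map (p : ℕ) {A B : Type*} [Group A] [Group B] (e : A ≃* B) :
    sInf (opSet p B) = (sInf (opSet p A)).map (e : A →* B) := by
  have h := (e.mapSubgroup).map_sInf (opSet p A)
  rw [← sInf_image, opSet_map p e, MulEquiv.mapSubgroup_apply] at h
  exact h.symm

lemma Op_map_conj (p : ℕ) (g : G) (H : Subgroup G) :
    Op p (H.map (MulAut.conj g).toMonoidHom) = (Op p H).map (MulAut.conj g).toMonoidHom := by
  set f := (MulAut.conj g).toMonoidHom with hf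
  have hi : Function.Injective f := (MulAut.conj g).injective
  rw [op_eq, op_eq, sInf_opSet_map p (Subgroup.equivMapOfInjective H f hi),
    Subgroup.map_map, Subgroup.map_map]
  congr 1

lemma Op_le (p : ℕ) (H : Subgroup G) : Op p H ≤ H := Subgroup.map_subtype_le _

lemma conj_mem_Op {p : ℕ} {H : Subgroup G} {h x : G} (hh : h ∈ H) (hx : x ∈ Op p H) :
    h * x * h⁻¹ ∈ Op p H := by
  obtain ⟨y, hy, rfl⟩ := hx
  have hn : (sInf (opSet p ↥H)).Normal := by
    constructor
    intro n hnn g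
    rw [Subgroup.mem_sInf] at hnn ⊢
    intro K hK
    exact hK.choose.conj_mem n (hnn K hK) g
  exact ⟨⟨h, hh⟩ * y * ⟨h, hh⟩⁻¹, hn.conj_mem y hy ⟨h, hh⟩, rfl⟩

lemma Op_card {p : ℕ} (hp : p.Prime) [Finite G] (H : Subgroup G) :
    ∃ k, Nat.card H = Nat.card (Op p H) * p ^ k := by
  haveI := Fact.mk hp
  obtain ⟨hn, hq⟩ := sInf_opSet_mem p ↥H
  haveI : (sInf (opSet p ↥H)).Normal := hn
  obtain ⟨k, hk⟩ := IsPGroup.iff_card.1 hq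
  refine ⟨k, ?_⟩
  have h1 := Subgroup.card_eq_card_quotient_mul_card_subgroup (sInf (opSet p ↥H))
  have h2 : Nat.card (Op p H) = Nat.card ↥(sInf (opSet p ↥H)) :=
    (Nat.card_congr (Subgroup.equivMapOfInjective _ H.subtype H.subtype_injective).toEquiv).symm
  rw [h1, hk, h2, mul_comm]

lemma le_normalizer_Op (p : ℕ) (H : Subgroup G) : H ≤ Subgroup.normalizer (Op p H : Set G) := by
  intro h hh
  rw [Subgroup.mem_normalizer_iff]
  intro n
  constructor
  · exact fun hn => conj_mem_Op hh hn
  · intro hn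
    have h2 := conj_mem_Op (H.inv_mem hh) hn
    have h3 : h⁻¹ * (h * n * h⁻¹) * h⁻¹⁻¹ = n := by group
    rwa [h3] at h2

lemma conj_smul_of_mem_normalizer {N : Subgroup G} {g : G} (hg : g ∈ Subgroup.normalizer (N : Set G)) :
    MulAut.conj g • N = N := by
  have h := Subgroup.mem_normalizer_iff.1 hg
  ext x
  constructor
  · rintro ⟨n, hn, rfl⟩
    exact (h n).1 hn
  · intro hx
    refine ⟨g⁻¹ * x * g, ?_, ?_⟩
    · have := (Subgroup.mem_normalizer_iff.1 ((Subgroup.normalizer (N : Set G)).inv_mem hg)) x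
      simpa [mul_assoc] using this.1 hx
    · simp [MulAut.conj]
      group

lemma eq_of_le_card [Finite G] {N A : Subgroup G} (h : N ≤ A)
    (hc : Nat.card A ≤ Nat.card N) : N = A := by
  have hsub : (N : Set G) ⊆ (A : Set G) := h
  have hcard : (A : Set G).ncard ≤ (N : Set G).ncard := by
    rw [← Nat.card_coe_set_eq, ← Nat.card_coe_set_eq]
    exact hc
  exact SetLike.coe_injective (Set.eq_of_subset_of_ncard_le hsub hcard (Set.toFinite _))

lemma map_conj_map_conj (g h : G) (K : Subgroup G) :
    (K.map (MulAut.conj h).toMonoidHom).map (MulAut.conj g).toMonoidHom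
      = K.map (MulAut.conj (g * h)).toMonoidHom := by
  rw [Subgroup.map_map]
  congr 1
  ext x
  simp [MulAut.conj, mul_assoc]

lemma map_conj_one (K : Subgroup G) : K.map (MulAut.conj (1 : G)).toMonoidHom = K := by
  ext x
  simp [MulAut.conj]

lemma isConj_refl (H : Subgroup G) : IsConjSubgroup H H := ⟨1, map_conj_one H⟩

lemma isConj_symm {H J : Subgroup G} (h : IsConjSubgroup H J) : IsConjSubgroup J H := by
  obtain ⟨g, hg⟩ := h
  exact ⟨g⁻¹, by rw [← hg, map_conj_map_conj, inv_mul_cancel, map_conj_one]⟩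

lemma isConj_trans {H J K : Subgroup G} (h1 : IsConjSubgroup H J) (h2 : IsConjSubgroup J K) :
    IsConjSubgroup H K := by
  obtain ⟨g, hg⟩ := h1
  obtain ⟨g', hg'⟩ := h2
  exact ⟨g' * g, by rw [← hg', ← hg, map_conj_map_conj]⟩

lemma main_lemma [Finite G] {p : ℕ} (hp : p.Prime)
    (hG : ¬ p ^ 2 ∣ Nat.card G) {A B : Subgroup G} (hAB : Op p A = Op p B)
    (hcard : Nat.card A = Nat.card B) : IsConjSubgroup A B := by
  haveI := Fact.mk hp
  set N := Op p B with hN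
  have hNA : N ≤ A := hAB ▸ Op_le p A
  have hNB : N ≤ B := Op_le p B
  obtain ⟨a, ha⟩ := Op_card hp A
  obtain ⟨b, hb⟩ := Op_card hp B
  rw [hAB] at ha
  rw [← hN] at hb
  have hNpos : 0 < Nat.card N := Nat.card_pos
  have hab : a = b := by
    have hpp : (p : ℕ) ^ a = p ^ b := by
      have h := hcard
      rw [ha, hb] at h
      exact Nat.eq_of_mul_eq_mul_left hNpos h
    exact Nat.pow_right_injective hp.two_le hpp
  subst hab
  have hdvdG : Nat.card N * p ^ a ∣ Nat.card G := ha ▸ A.card_subgroup_dvd_card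
  have ha1 : a ≤ 1 := by
    by_contra hcon
    push_neg at hcon
    exact hG ((pow_dvd_pow p hcon).trans ((dvd_mul_left _ _).trans hdvdG))
  interval_cases a
  · have hA : N = A := eq_of_le_card hNA (le_of_eq (by rw [ha, pow_zero, mul_one]))
    have hB : N = B := eq_of_le_card hNB (le_of_eq (by rw [hb, pow_zero, mul_one]))
    rw [← hA, ← hB]
    exact isConj_refl N
  · rw [pow_one] at ha hb hdvdG
    have hpN : ¬ p ∣ Nat.card N := by
      intro hd
      obtain ⟨c, hc⟩ := hd
      exact hG (dvd_trans ⟨c, by rw [hc]; ring⟩ hdvdG)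
    set M := Subgroup.normalizer (N : Set G) with hM
    have hAM : A ≤ M := by
      have h := le_normalizer_Op p A
      rw [hAB] at h
      rw [hM]
      exact h
    have hBM : B ≤ M := le_normalizer_Op p B
    have key : ∀ C R : Subgroup G, N ≤ C → R ≤ C → Nat.card R = p →
        Nat.card C = Nat.card N * p → N ⊔ R = C := by
      intro C R hNC hRC hRcard hCcard
      have h1 : N ⊔ R ≤ C := sup_le hNC hRC
      have h2 : Nat.card N ∣ Nat.card (N ⊔ R : Subgroup G) := Subgroup.card_dvd_of_le le_sup_left
      have h3 : p ∣ Nat.card (N ⊔ R : Subgroup G) :=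
        hRcard ▸ Subgroup.card_dvd_of_le le_sup_right
      have hcop : Nat.Coprime (Nat.card N) p :=
        Nat.coprime_comm.1 ((Nat.Prime.coprime_iff_not_dvd hp).2 hpN)
      have h4 : Nat.card N * p ∣ Nat.card (N ⊔ R : Subgroup G) :=
        Nat.Coprime.mul_dvd_of_dvd_of_dvd hcop h2 h3
      have h5 : Nat.card C ≤ Nat.card (N ⊔ R : Subgroup G) :=
        hCcard ▸ Nat.le_of_dvd Nat.card_pos h4
      exact eq_of_le_card h1 h5
    have hpA : p ∣ Nat.card A := ha ▸ dvd_mul_left p (Nat.card N)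
    have hpB : p ∣ Nat.card B := hb ▸ dvd_mul_left p (Nat.card N)
    obtain ⟨x, hx⟩ := exists_prime_orderOf_dvd_card' (G := A) p hpA
    obtain ⟨y, hy⟩ := exists_prime_orderOf_dvd_card' (G := B) p hpB
    set P := Subgroup.zpowers (x : G) with hP
    set Q := Subgroup.zpowers (y : G) with hQ
    have hPcard : Nat.card P = p := by
      rw [hP, Nat.card_zpowers]
      exact (orderOf_injective A.subtype A.subtype_injective x).trans hx
    have hQcard : Nat.card Q = p := by
      rw [hQ, Nat.card_zpowers]
      exact (orderOf_injective B.subtype B.subtype_injective y).trans hy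
    have hPA : P ≤ A := Subgroup.zpowers_le.2 x.2
    have hQB : Q ≤ B := Subgroup.zpowers_le.2 y.2
    have hsupA : N ⊔ P = A := key A P hNA hPA hPcard ha
    have hsupB : N ⊔ Q = B := key B Q hNB hQB hQcard hb
    have hPM : P ≤ M := hPA.trans hAM
    have hQM : Q ≤ M := hQB.trans hBM
    have hpM : p ∣ Nat.card M := hPcard ▸ Subgroup.card_dvd_of_le hPM
    have hp2M : ¬ p ^ 2 ∣ Nat.card M := fun hd => hG (hd.trans M.card_subgroup_dvd_card)
    have hM0 : Nat.card M ≠ 0 := Nat.card_pos.ne'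
    have hMfact : (Nat.card M).factorization p = 1 := by
      have hge : 1 ≤ (Nat.card ↥M).factorization p :=
        (Nat.Prime.pow_dvd_iff_le_factorization hp hM0).1 (by simpa using hpM)
      have hlt : (Nat.card ↥M).factorization p < 2 := by
        by_contra hcon
        push_neg at hcon
        exact hp2M ((Nat.Prime.pow_dvd_iff_le_factorization hp hM0).2 hcon)
      omega
    have hP' : Nat.card (P.subgroupOf M) = p ^ (Nat.card ↥M).factorization p := by
      rw [hMfact, pow_one, Nat.card_congr (Subgroup.subgroupOfEquivOfLe hPM).toEquiv, hPcard]
    have hQ' : Nat.card (Q.subgroupOf M) = p ^ (Nat.card ↥M).factorization p := by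
      rw [hMfact, pow_one, Nat.card_congr (Subgroup.subgroupOfEquivOfLe hQM).toEquiv, hQcard]
    set PS : Sylow p ↥M := Sylow.ofCard (P.subgroupOf M) hP' with hPS
    set QS : Sylow p ↥M := Sylow.ofCard (Q.subgroupOf M) hQ' with hQS
    obtain ⟨m, hm⟩ := MulAction.exists_smul_eq (↥M) PS QS
    have hm' : MulAut.conj m • (P.subgroupOf M) = Q.subgroupOf M := by
      have h1 : ((m • PS : Sylow p ↥M) : Subgroup ↥M) = (QS : Subgroup ↥M) := by rw [hm]
      rw [Sylow.coe_subgroup_smul, hPS, hQS, Sylow.coe_ofCard, Sylow.coe_ofCard] at h1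
      exact h1
    rw [Subgroup.conj_smul_subgroupOf hPM m] at hm'
    have hPQ : MulAut.conj (↑m : G) • P = Q := by
      have h2 := Subgroup.subgroupOf_inj.1 hm'
      rwa [inf_eq_left.2 (Subgroup.conj_smul_le_of_le hPM m), inf_eq_left.2 hQM] at h2
    refine ⟨(m : G), ?_⟩
    have hsmul : MulAut.conj (↑m : G) • A = B := by
      rw [← hsupA, Subgroup.smul_sup, hPQ, conj_smul_of_mem_normalizer m.2, hsupB]
    exact hsmul

end StmtAux

open StmtAux in
/-- Let `G` be a finite group and `p` a prime with `p² ∤ |G|`.  If `H, J, J'` are subgroups of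
`G` such that `O^p(H)`, `O^p(J)`, `O^p(J')` are pairwise conjugate in `G`, then at least two of
`H, J, J'` are conjugate in `G`. -/
theorem stmt_14 (G : Type) [Group G] [Finite G] (p : ℕ) (hp : p.Prime)
    (hG : ¬ p ^ 2 ∣ Nat.card G) (H J J' : Subgroup G)
    (h1 : IsConjSubgroup (Op p H) (Op p J)) (h2 : IsConjSubgroup (Op p J) (Op p J'))
    (h3 : IsConjSubgroup (Op p H) (Op p J')) :
    IsConjSubgroup H J ∨ IsConjSubgroup H J' ∨ IsConjSubgroup J J' := by
  obtain ⟨g1, hg1⟩ := h1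
  obtain ⟨g2, hg2⟩ := h2
  set A := H.map (MulAut.conj g1).toMonoidHom with hA
  set C := J'.map (MulAut.conj g2⁻¹).toMonoidHom with hC
  have hHA : IsConjSubgroup H A := ⟨g1, rfl⟩
  have hJ'C : IsConjSubgroup J' C := ⟨g2⁻¹, rfl⟩
  have hOpA : Op p A = Op p J := by rw [hA, Op_map_conj, hg1]
  have hOpC : Op p C = Op p J := by
    rw [hC, Op_map_conj, ← hg2, map_conj_map_conj, inv_mul_cancel, map_conj_one]
  obtain ⟨a, ha⟩ := Op_card hp A
  obtain ⟨j, hj⟩ := Op_card hp J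
  obtain ⟨c, hc⟩ := Op_card hp C
  rw [hOpA] at ha
  rw [hOpC] at hc
  set n := Nat.card (Op p J) with hn
  have bound : ∀ (X : Subgroup G) (k : ℕ), Nat.card X = n * p ^ k → k ≤ 1 := by
    intro X k hk
    by_contra hcon
    push_neg at hcon
    exact hG ((pow_dvd_pow p hcon).trans
      ((dvd_mul_left _ _).trans (hk ▸ X.card_subgroup_dvd_card)))
  have ba := bound A a ha
  have bj := bound J j hj
  have bc := bound C c hc
  have habc : a = j ∨ a = c ∨ j = c := by omega
  rcases habc with h | h | h
  · left
    have hconj : IsConjSubgroup A J :=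
      main_lemma hp hG hOpA (by rw [ha, hj, h])
    exact isConj_trans hHA hconj
  · right; left
    have hconj : IsConjSubgroup A C :=
      main_lemma hp hG (hOpA.trans hOpC.symm) (by rw [ha, hc, h])
    exact isConj_trans hHA (isConj_trans hconj (isConj_symm hJ'C))
  · right; right
    have hconj : IsConjSubgroup J C :=
      main_lemma hp hG hOpC.symm (by rw [hj, hc, h])
    exact isConj_trans hconj (isConj_symm hJ'C)
end

section
/- Let F be a field and let S be a commutative local finite-dimensional F-algebra with maximal ideal 𝓜 such that S/𝓜 ≅ F and dim_F 𝓜/𝓜² ≤ 1. Then S is symmetric: there exists an F-linear map λ : S → F whose kernel contains no non-zero ideal of S. -/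
/-- Let `F` be a field and `S` a commutative local finite-dimensional `F`-algebra with maximal
ideal `𝓜` such that `S/𝓜 ≅ F` and `dim_F 𝓜/𝓜² ≤ 1`.  Then `S` is symmetric: there is an
`F`-linear map `λ : S → F` whose kernel contains no non-zero ideal of `S`. -/
theorem stmt_19 (F : Type) [Field F] (S : Type) [CommRing S] [Algebra F S]
    [FiniteDimensional F S] [IsLocalRing S]
    (hres : Nonempty ((S ⧸ IsLocalRing.maximalIdeal S) ≃ₐ[F] F))
    (hdim : Module.finrank F (IsLocalRing.maximalIdeal S).Cotangent ≤ 1) :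
    ∃ lam : S →ₗ[F] F, ∀ J : Ideal S, (∀ x ∈ J, lam x = 0) → J = ⊥ := by
  classical
  set M := IsLocalRing.maximalIdeal S with hMdef
  have hart : IsArtinianRing S := isArtinian_of_tower F inferInstance
  -- M is nilpotent
  obtain ⟨N, hN⟩ : IsNilpotent M := by
    rw [hMdef, ← IsLocalRing.jacobson_eq_maximalIdeal ⊥ bot_ne_top]
    exact IsArtinianRing.isNilpotent_jacobson_bot
  -- Cotangent is finite dimensional over F
  have hfinM : Module.Finite F ↥M :=
    inferInstanceAs (Module.Finite F (Submodule.restrictScalars F M))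
  have hfin : Module.Finite F M.Cotangent :=
    Module.Finite.of_surjective ((M.toCotangent).restrictScalars F)
      (Ideal.toCotangent_surjective M)
  obtain ⟨v, hv⟩ := finrank_le_one_iff.mp hdim
  obtain ⟨t, ht⟩ := Ideal.toCotangent_surjective M v
  set T : Ideal S := Ideal.span {(t : S)} with hTdef
  -- M ≤ T ⊔ M^2
  have key : M ≤ T ⊔ M ^ 2 := by
    intro x hx
    obtain ⟨c, hc⟩ := hv (M.toCotangent ⟨x, hx⟩)
    have h0 : M.toCotangent (⟨x, hx⟩ - c • t) = 0 := by
      have : ((M.toCotangent).restrictScalars F) (⟨x, hx⟩ - c • t) = 0 := by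
        rw [map_sub, map_smul]
        simp only [LinearMap.coe_restrictScalars]
        rw [ht, hc, sub_self]
      exact this
    have h2 : ((⟨x, hx⟩ - c • t : ↥M) : S) ∈ M ^ 2 :=
      (Ideal.toCotangent_eq_zero _ _).mp h0
    have hxe : x = (x - c • (t : S)) + c • (t : S) := by ring_nf
    have hmem : c • (t : S) ∈ T := by
      rw [Algebra.smul_def]
      exact Ideal.mul_mem_left _ _ (Ideal.subset_span rfl)
    have : (x - c • (t : S)) ∈ M ^ 2 := h2
    rw [hxe]
    exact Submodule.add_mem _ (Submodule.mem_sup_right this) (Submodule.mem_sup_left hmem)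
  -- Nakayama by hand
  have pow : ∀ k, M ≤ T ⊔ M ^ (k + 1) := by
    intro k
    induction k with
    | zero => simpa [pow_one] using (le_sup_right : M ^ 1 ≤ T ⊔ M ^ 1)
    | succ k ih =>
      have h2 : M ^ 2 ≤ T ⊔ M ^ (k + 2) := by
        calc M ^ 2 = M * M := sq M
          _ ≤ M * (T ⊔ M ^ (k + 1)) := Ideal.mul_mono_right ih
          _ = M * T ⊔ M * M ^ (k + 1) := Ideal.mul_sup _ _ _
          _ ≤ T ⊔ M ^ (k + 2) := sup_le_sup Ideal.mul_le_right (le_of_eq (pow_succ' M (k + 1)).symm)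
      exact key.trans (sup_le le_sup_left h2)
  have hMT : M = T := by
    refine le_antisymm ?_ ?_
    · have := pow N
      have hle : M ^ (N + 1) ≤ M ^ N := Ideal.pow_le_pow_right (Nat.le_succ N)
      rw [hN] at hle
      simpa [le_bot_iff.mp hle] using this
    · rw [hTdef, Ideal.span_le]
      rintro y rfl
      exact t.2
  clear_value M T
  -- minimal n with t^n = 0
  have hex : ∃ m, (t : S) ^ m = 0 := by
    refine ⟨N, ?_⟩
    have : (t : S) ^ N ∈ M ^ N := Ideal.pow_mem_pow t.2 N
    rw [hN] at this
    simpa using this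
  obtain ⟨n, hn0, hnmin⟩ : ∃ n, (t : S) ^ n = 0 ∧ ∀ m < n, (t : S) ^ m ≠ 0 :=
    ⟨Nat.find hex, Nat.find_spec hex, fun m hm => Nat.find_min hex hm⟩
  have hn1 : 1 ≤ n := by
    rcases Nat.eq_zero_or_pos n with h | h
    · exfalso
      have := hn0
      rw [h, pow_zero] at this
      exact one_ne_zero this
    · exact h
  set s : S := (t : S) ^ (n - 1) with hsdef
  have hs : s ≠ 0 := hnmin _ (Nat.sub_lt hn1 one_pos)
  -- powers of M
  have hMpow : ∀ k, M ^ k = Ideal.span {(t : S) ^ k} := by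
    intro k
    calc M ^ k = T ^ k := congrArg (· ^ k) hMT
      _ = Ideal.span {(t : S) ^ k} := by rw [hTdef, Ideal.span_singleton_pow]
  -- the functional
  have : ¬ ∀ φ : Module.Dual F S, φ s = 0 := by
    rw [Module.forall_dual_apply_eq_zero_iff]
    exact hs
  push_neg at this
  obtain ⟨φ, hφ⟩ := this
  refine ⟨φ, ?_⟩
  intro J hJ
  by_contra hJne
  obtain ⟨x, hxJ, hx0⟩ := Submodule.exists_mem_ne_zero_of_ne_bot hJne
  -- find maximal k with x ∈ M^k
  have hex2 : ∃ i, x ∉ M ^ i := by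
    refine ⟨n, ?_⟩
    rw [hMpow n, hn0, Ideal.span_singleton_eq_bot.mpr rfl]
    simpa using hx0
  obtain ⟨k0, hk0spec, hk0min⟩ : ∃ k0, x ∉ M ^ k0 ∧ ∀ i < k0, x ∈ M ^ i :=
    ⟨Nat.find hex2, Nat.find_spec hex2, fun i hi => of_not_not (Nat.find_min hex2 hi)⟩
  have hk0pos : 1 ≤ k0 := by
    rcases Nat.eq_zero_or_pos k0 with h | h
    · exfalso
      rw [h, pow_zero, Ideal.one_eq_top] at hk0spec
      exact hk0spec Submodule.mem_top
    · exact h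
  set k := k0 - 1 with hkdef
  have hxk : x ∈ M ^ k := hk0min _ (Nat.sub_lt hk0pos one_pos)
  have hxk1 : x ∉ M ^ (k + 1) := by
    have : k + 1 = k0 := Nat.succ_pred_eq_of_pos hk0pos
    rw [this]
    exact hk0spec
  rw [hMpow k, Ideal.mem_span_singleton] at hxk
  obtain ⟨u, hu⟩ := hxk
  have hunit : IsUnit u := by
    by_contra hnu
    apply hxk1
    have humem : u ∈ M := hMdef ▸ hnu
    rw [hMT, hTdef, Ideal.mem_span_singleton] at humem
    obtain ⟨w, hw⟩ := humem
    rw [hMpow (k + 1), Ideal.mem_span_singleton]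
    exact ⟨w, by rw [hu, hw, pow_succ]; ring⟩
  have hkn : k < n := by
    by_contra h
    push_neg at h
    have h0 : (t : S) ^ k = 0 := by
      have h1 : (t : S) ^ k = (t : S) ^ n * (t : S) ^ (k - n) := by
        rw [← pow_add, Nat.add_sub_cancel' h]
      rw [h1, hn0, zero_mul]
    exact hx0 (by rw [hu, h0, zero_mul])
  -- s ∈ J
  have hsJ : s ∈ J := by
    have hkle : k ≤ n - 1 := Nat.le_sub_one_of_lt hkn
    have heq : s = x * (↑hunit.unit⁻¹ * (t : S) ^ (n - 1 - k)) := by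
      rw [hu, hsdef]
      have h1 : (t : S) ^ (n - 1) = (t : S) ^ k * (t : S) ^ (n - 1 - k) := by
        rw [← pow_add, Nat.add_sub_cancel' hkle]
      rw [h1]
      have h2 : u * ↑hunit.unit⁻¹ = 1 := by
        rw [IsUnit.mul_val_inv]
      calc (t:S)^k * (t:S)^(n-1-k) = (t:S)^k * (u * ↑hunit.unit⁻¹) * (t:S)^(n-1-k) := by
            rw [h2, mul_one]
        _ = (t:S)^k * u * (↑hunit.unit⁻¹ * (t:S)^(n-1-k)) := by ring
    rw [heq]
    exact J.mul_mem_right _ hxJ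
  exact hφ (hJ s hsJ)
end
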